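/- arXiv:1105.0230 — 14 statements merged into one kernel-verified Lean document; each statement's English description precedes it below -/
import Mathlib

section
/- For every real number x > 1 and every a with 0 < a < 1, setting ζ = a/(1+a), one has sqrt((x + a*x^2)/(x + a)) > x^ζ. -/
lemma sinh_mul_lt (a t : ℝ) (ha : 0 < a) (ha1 : a < 1) (ht : 0 < t) :
    Real.sinh (a * t) < a * Real.sinh t := by
  have h : StrictMonoOn (fun s => a * Real.sinh s - Real.sinh (a * s)) (Set.Ici 0) := by
    apply strictMonoOn_of_deriv_pos (convex_Ici 0)
    · fun_prop
    · intro s hs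
      rw [interior_Ici] at hs
      have hs' : 0 < s := hs
      have hd : HasDerivAt (fun s => a * Real.sinh s - Real.sinh (a * s))
          (a * Real.cosh s - Real.cosh (a * s) * a) s := by
        have h1 : HasDerivAt (fun s : ℝ => a * s) a s := by
          simpa using (hasDerivAt_id s).const_mul a
        exact ((Real.hasDerivAt_sinh s).const_mul a).sub
          ((Real.hasDerivAt_sinh (a * s)).comp s h1)
      rw [hd.deriv]
      have hcc : Real.cosh (a * s) < Real.cosh s := by
        rw [Real.cosh_lt_cosh]
        rw [abs_of_pos hs', abs_of_pos (by nlinarith : (0:ℝ) < a * s)]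
        nlinarith
      nlinarith
  have h0 : (0:ℝ) ∈ Set.Ici (0:ℝ) := Set.mem_Ici.mpr le_rfl
  have := h h0 (le_of_lt ht) ht
  simp at this
  linarith

theorem M_gt_rpow (a x : ℝ) (ha : 0 < a) (ha1 : a < 1) (hx : 1 < x) :
    Real.sqrt ((x + a * x ^ 2) / (x + a)) > x ^ (a / (1 + a)) := by
  have hx0 : 0 < x := by linarith
  have ha0 : (0:ℝ) < 1 + a := by linarith
  set u : ℝ := Real.log x / (1 + a) with hu
  have hlog : 0 < Real.log x := Real.log_pos hx
  have hupos : 0 < u := by positivity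
  have hxe : x = Real.exp ((1 + a) * u) := by
    rw [hu]
    rw [mul_div_cancel₀ _ (ne_of_gt ha0), Real.exp_log hx0]
  have hrpow : x ^ (a / (1 + a)) = Real.exp (a * u) := by
    rw [Real.rpow_def_of_pos hx0, hu]; ring_nf
  set p : ℝ := Real.exp u with hp
  set q : ℝ := Real.exp (a * u) with hq
  have hppos : 0 < p := Real.exp_pos u
  have hqpos : 0 < q := Real.exp_pos (a * u)
  have key : q - q⁻¹ < a * (p - p⁻¹) := by
    have := sinh_mul_lt a u ha ha1 hupos
    rw [Real.sinh_eq, Real.sinh_eq, Real.exp_neg, Real.exp_neg] at this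
    rw [← hp, ← hq] at this
    linarith
  have key2 : p * q ^ 2 - p < a * (p ^ 2 * q - q) := by
    have h2 := mul_lt_mul_of_pos_right key (mul_pos hppos hqpos)
    have e1 : (q - q⁻¹) * (p * q) = p * q ^ 2 - p := by
      field_simp
    have e2 : a * (p - p⁻¹) * (p * q) = a * (p ^ 2 * q - q) := by
      field_simp
    rw [e1, e2] at h2
    exact h2
  have key3 : p * q ^ 3 - p * q < a * (p ^ 2 * q ^ 2 - q ^ 2) := by
    nlinarith [mul_lt_mul_of_pos_right key2 hqpos]
  have hxpq' : x = p * q := by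
    rw [hxe, hp, hq, ← Real.exp_add]; ring_nf
  have hden : 0 < x + a := by linarith
  rw [hrpow, gt_iff_lt, Real.lt_sqrt hqpos.le, lt_div_iff₀ hden, hxpq']
  nlinarith [key3]
end

section
/- For all real x > 1, and any a ∈ (0,1), the inequality sqrt((x+a)/(1+a)) < (x-1)/(2(1+a)) + 1 < (1 + 2a*x + x^2)/(1 + (1+2a)x) holds; consequently sqrt((x+a)/(1+a)) < (1 + 2a*x + x^2)/(1 + (1+2a)x). -/
theorem sqrt_lt_linear_lt_ratio (a x : ℝ) (ha : 0 < a) (ha1 : a < 1) (hx : 1 < x) :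
    Real.sqrt ((x + a) / (1 + a)) < (x - 1) / (2 * (1 + a)) + 1 ∧
    (x - 1) / (2 * (1 + a)) + 1 < (1 + 2 * a * x + x ^ 2) / (1 + (1 + 2 * a) * x) ∧
    Real.sqrt ((x + a) / (1 + a)) < (1 + 2 * a * x + x ^ 2) / (1 + (1 + 2 * a) * x) := by
  have h1a : (0:ℝ) < 1 + a := by linarith
  have hD : (0:ℝ) < 1 + (1 + 2 * a) * x := by nlinarith
  have hL : (0:ℝ) < (x - 1) / (2 * (1 + a)) + 1 := by
    have : 0 ≤ (x - 1) / (2 * (1 + a)) := div_nonneg (by linarith) (by linarith)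
    linarith
  have h1 : Real.sqrt ((x + a) / (1 + a)) < (x - 1) / (2 * (1 + a)) + 1 := by
    rw [Real.sqrt_lt' hL, div_lt_iff₀ h1a]
    have h := sq_nonneg (x - 1)
    field_simp
    nlinarith [mul_pos (sub_pos.2 hx) (sub_pos.2 hx), sq_nonneg (x-1)]
  have h2 : (x - 1) / (2 * (1 + a)) + 1 < (1 + 2 * a * x + x ^ 2) / (1 + (1 + 2 * a) * x) := by
    rw [div_add' _ _ _ (by positivity), div_lt_div_iff₀ (by positivity) hD]
    nlinarith [mul_pos ha (mul_pos (sub_pos.2 hx) (sub_pos.2 hx)), sq_nonneg (x-1), mul_pos (sub_pos.2 hx) (sub_pos.2 hx)]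
  exact ⟨h1, h2, h1.trans h2⟩
end

section
/- Let a ∈ (0,1), κ = sqrt(1-a), ν = sqrt(1-a^2)/a, and define v(x) = (ν*sqrt(x+a) + κ*(x-1))/sqrt(x + a*x^2) for x > 1. Then v is strictly decreasing on (1, ∞). -/
set_option maxHeartbeats 1000000


theorem v_strictAnti (a : ℝ) (ha : 0 < a) (ha1 : a < 1) :
    StrictAntiOn
      (fun x : ℝ =>
        (Real.sqrt (1 - a ^ 2) / a * Real.sqrt (x + a) + Real.sqrt (1 - a) * (x - 1)) /
          Real.sqrt (x + a * x ^ 2))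
      (Set.Ioi 1) := by
  have key : ∀ x ∈ Set.Ioi (1 : ℝ), HasDerivAt
      (fun x : ℝ =>
        (Real.sqrt (1 - a ^ 2) / a * Real.sqrt (x + a) + Real.sqrt (1 - a) * (x - 1)) /
          Real.sqrt (x + a * x ^ 2))
      (((Real.sqrt (1 - a ^ 2) / a * (1 / (2 * Real.sqrt (x + a))) + Real.sqrt (1 - a)) *
            Real.sqrt (x + a * x ^ 2) -
          (Real.sqrt (1 - a ^ 2) / a * Real.sqrt (x + a) + Real.sqrt (1 - a) * (x - 1)) *
            ((1 + a * (2 * x)) / (2 * Real.sqrt (x + a * x ^ 2)))) /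
        (Real.sqrt (x + a * x ^ 2)) ^ 2) x := by
    intro x hx
    simp only [Set.mem_Ioi] at hx
    have hx0 : (0:ℝ) < x := by linarith
    have hxa : (0:ℝ) < x + a := by linarith
    have hxx : (0:ℝ) < x + a * x ^ 2 := by positivity
    have h1 : HasDerivAt (fun y : ℝ => y + a) 1 x := (hasDerivAt_id x).add_const a
    have hs1 : HasDerivAt (fun y : ℝ => Real.sqrt (y + a))
        (1 / (2 * Real.sqrt (x + a))) x := h1.sqrt hxa.ne'
    have hnum : HasDerivAt
        (fun y : ℝ => Real.sqrt (1 - a ^ 2) / a * Real.sqrt (y + a) + Real.sqrt (1 - a) * (y - 1))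
        (Real.sqrt (1 - a ^ 2) / a * (1 / (2 * Real.sqrt (x + a))) + Real.sqrt (1 - a)) x := by
      have h2 : HasDerivAt (fun y : ℝ => Real.sqrt (1 - a) * (y - 1)) (Real.sqrt (1 - a)) x := by
        simpa using ((hasDerivAt_id x).sub_const 1).const_mul (Real.sqrt (1 - a))
      exact (hs1.const_mul (Real.sqrt (1 - a ^ 2) / a)).add h2
    have h3 : HasDerivAt (fun y : ℝ => y + a * y ^ 2) (1 + a * (2 * x)) x := by
      have := ((hasDerivAt_pow 2 x).const_mul a)
      simpa using (hasDerivAt_id x).fun_add this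
    have hden : HasDerivAt (fun y : ℝ => Real.sqrt (y + a * y ^ 2))
        ((1 + a * (2 * x)) / (2 * Real.sqrt (x + a * x ^ 2))) x := h3.sqrt hxx.ne'
    exact hnum.div hden (by positivity)
  apply strictAntiOn_of_deriv_neg (convex_Ioi 1)
  · exact fun x hx => ((key x hx).continuousAt).continuousWithinAt
  · intro x hx
    rw [interior_Ioi] at hx
    rw [(key x hx).deriv]
    simp only [Set.mem_Ioi] at hx
    have hx0 : (0:ℝ) < x := by linarith
    have hxa : (0:ℝ) < x + a := by linarith
    have hxx : (0:ℝ) < x + a * x ^ 2 := by positivity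
    set s1 := Real.sqrt (x + a) with hs1def
    set s2 := Real.sqrt (x + a * x ^ 2) with hs2def
    have hs1 : 0 < s1 := Real.sqrt_pos.mpr hxa
    have hs2 : 0 < s2 := Real.sqrt_pos.mpr hxx
    have e1 : s1 ^ 2 = x + a := Real.sq_sqrt hxa.le
    have e2 : s2 ^ 2 = x + a * x ^ 2 := Real.sq_sqrt hxx.le
    set k := Real.sqrt (1 - a) with hkdef
    set t := Real.sqrt (1 + a) with htdef
    have hk : 0 < k := Real.sqrt_pos.mpr (by linarith)
    have ht : 0 < t := Real.sqrt_pos.mpr (by linarith)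
    have et : t ^ 2 = 1 + a := Real.sq_sqrt (by linarith)
    have hkt : Real.sqrt (1 - a ^ 2) = k * t := by
      rw [hkdef, htdef, ← Real.sqrt_mul (by linarith)]
      ring_nf
    set P : ℝ := (1 + 2 * a) * x + 1 with hPdef
    set Q : ℝ := x ^ 2 + 2 * a * x + 1 with hQdef
    have hP : 0 < P := by rw [hPdef]; nlinarith
    have hQ : 0 < Q := by rw [hQdef]; nlinarith
    set N : ℝ := (Real.sqrt (1 - a ^ 2) / a * (1 / (2 * s1)) + k) * s2 -
        (Real.sqrt (1 - a ^ 2) / a * s1 + k * (x - 1)) * ((1 + a * (2 * x)) / (2 * s2)) with hNdef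
    have hid : N * (2 * a * s1 * s2) = a * k * (s1 * P - t * Q) := by
      rw [hNdef, hkt, hPdef, hQdef]
      field_simp
      linear_combination (t + a*2*s1) * e2 - (t*(1+2*a*x)) * e1
    have hsqlt : (s1 * P) ^ 2 < (t * Q) ^ 2 := by
      have d1 : (s1 * P) ^ 2 = (x + a) * P ^ 2 := by rw [mul_pow, e1]
      have d2 : (t * Q) ^ 2 = (1 + a) * Q ^ 2 := by rw [mul_pow, et]
      rw [d1, d2]
      have hfac : (1 + a) * Q ^ 2 - (x + a) * P ^ 2 =
          (x - 1) ^ 2 * ((1 + a) * x ^ 2 + (1 + 2 * a) * x + 1) := by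
        rw [hPdef, hQdef]; ring
      have hb : 0 < (x - 1) ^ 2 * ((1 + a) * x ^ 2 + (1 + 2 * a) * x + 1) :=
        mul_pos (pow_pos (by linarith) 2) (by nlinarith)
      linarith
    have hlt : s1 * P < t * Q := by
      refine lt_of_pow_lt_pow_left₀ 2 (by positivity) ?_
      exact hsqlt
    have hMneg : a * k * (s1 * P - t * Q) < 0 := by
      apply mul_neg_of_pos_of_neg (by positivity)
      linarith
    have hNneg : N < 0 := by
      have hpos : (0:ℝ) < 2 * a * s1 * s2 := by positivity
      by_contra h
      push_neg at h
      have := mul_nonneg h hpos.le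
      linarith [hid ▸ this]
    exact div_neg_of_neg_of_pos hNneg (by positivity)
end

section
/- Let a ∈ (0,1) and E(x) = (1 + a*x)/(x + a) for x > 0. Then for 0 < x, y with x,y > 0, E(x*y) > E(x)*E(y) holds if and only if (1 - x*y)*(1 - x)*(1 - y) < 0. In particular: (a) if 0 < x < 1 < y, then E(xy) > E(x)E(y) if and only if xy < 1; (b) if 0 < x < 1 and 0 < y < 1, then E(xy) < E(x)E(y). -/
theorem E_mul_iff (a : ℝ) (ha : 0 < a) (ha1 : a < 1) :
    (∀ x y : ℝ, 0 < x → 0 < y →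
      ((1 + a * (x * y)) / (x * y + a) > (1 + a * x) / (x + a) * ((1 + a * y) / (y + a)) ↔
        (1 - x * y) * (1 - x) * (1 - y) < 0)) ∧
    (∀ x y : ℝ, 0 < x → x < 1 → 1 < y →
      ((1 + a * (x * y)) / (x * y + a) > (1 + a * x) / (x + a) * ((1 + a * y) / (y + a)) ↔
        x * y < 1)) ∧
    (∀ x y : ℝ, 0 < x → x < 1 → 0 < y → y < 1 →
      (1 + a * (x * y)) / (x * y + a) < (1 + a * x) / (x + a) * ((1 + a * y) / (y + a))) := by
  have ha' : 0 < 1 - a := by linarith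
  have key : ∀ x y : ℝ, 0 < x → 0 < y →
      ((1 + a * (x * y)) / (x * y + a) > (1 + a * x) / (x + a) * ((1 + a * y) / (y + a)) ↔
        (1 - x * y) * (1 - x) * (1 - y) < 0) := by
    intro x y hx hy
    have hxa : 0 < x + a := by linarith
    have hya : 0 < y + a := by linarith
    have hxya : 0 < x * y + a := by positivity
    rw [gt_iff_lt, div_mul_div_comm, div_lt_div_iff₀ (by positivity) hxya]
    constructor <;> intro h <;>
      nlinarith [mul_pos ha ha', mul_pos (mul_pos ha ha') hxya,
        mul_pos hx hy]
    -- fallback hints above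
  refine ⟨key, ?_, ?_⟩
  · intro x y hx hx1 hy1
    rw [key x y hx (by linarith)]
    have hp : (0:ℝ) < (1 - x) * (y - 1) := mul_pos (by linarith) (by linarith)
    constructor
    · intro h
      by_contra h1
      push_neg at h1
      nlinarith [mul_nonneg (by linarith : (0:ℝ) ≤ x * y - 1) hp.le]
    · intro h
      nlinarith [mul_pos (by linarith : (0:ℝ) < 1 - x * y) hp]
  · intro x y hx hx1 hy hy1
    have h := key x y hx hy
    have hprod : ¬ ((1 - x * y) * (1 - x) * (1 - y) < 0) := by
      have hxy1 : x * y < 1 := by nlinarith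
      push_neg
      exact le_of_lt (mul_pos (mul_pos (by linarith) (by linarith)) (by linarith))
    have hle : (1 + a * (x * y)) / (x * y + a) ≤
        (1 + a * x) / (x + a) * ((1 + a * y) / (y + a)) := by
      by_contra hc
      exact hprod (h.mp (lt_of_not_ge hc))
    rcases lt_or_eq_of_le hle with h' | h'
    · exact h'
    · exfalso
      have hxa : 0 < x + a := by linarith
      have hya : 0 < y + a := by linarith
      have hxya : 0 < x * y + a := by positivity
      rw [div_mul_div_comm, div_eq_div_iff hxya.ne' (by positivity)] at h'
      nlinarith [mul_pos (mul_pos ha ha') (mul_pos (mul_pos (by nlinarith : (0:ℝ) < 1 - x*y) (by linarith : (0:ℝ) < 1 - x)) (by linarith : (0:ℝ) < 1 - y))]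
end

section
/- Let a ∈ (0,1), γ = (1+a)/(1-a), and Γ(s) = s^γ * (1 - a*s)/(s - a) for a < s < 1/a. Then Γ'(s) = -a*γ*s^{γ-1}*(s-1)^2/(s-a)^2 for all s ∈ (a, 1/a); in particular Γ is strictly decreasing on (a, 1/a), and Γ(s) > 1 for s < 1 while Γ(s) < 1 for s > 1. -/
theorem Gamma_deriv_and_monotone (a : ℝ) (ha : 0 < a) (ha1 : a < 1) :
    (∀ s ∈ Set.Ioo a (1 / a),
      HasDerivAt (fun s : ℝ => s ^ ((1 + a) / (1 - a)) * (1 - a * s) / (s - a))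
        (-a * ((1 + a) / (1 - a)) * s ^ ((1 + a) / (1 - a) - 1) * (s - 1) ^ 2 / (s - a) ^ 2)
        s) ∧
    StrictAntiOn (fun s : ℝ => s ^ ((1 + a) / (1 - a)) * (1 - a * s) / (s - a))
      (Set.Ioo a (1 / a)) ∧
    (∀ s ∈ Set.Ioo a (1 / a), s < 1 →
      1 < s ^ ((1 + a) / (1 - a)) * (1 - a * s) / (s - a)) ∧
    (∀ s ∈ Set.Ioo a (1 / a), 1 < s →
      s ^ ((1 + a) / (1 - a)) * (1 - a * s) / (s - a) < 1) := by
  set γ : ℝ := (1 + a) / (1 - a) with hγ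
  have h1a : (0:ℝ) < 1 - a := by linarith
  have hγpos : 0 < γ := div_pos (by linarith) h1a
  have hinv : 1 < 1 / a := by rw [lt_div_iff₀ ha]; linarith
  set f : ℝ → ℝ := fun s : ℝ => s ^ γ * (1 - a * s) / (s - a) with hf
  -- derivative
  have hder : ∀ s ∈ Set.Ioo a (1 / a),
      HasDerivAt f (-a * γ * s ^ (γ - 1) * (s - 1) ^ 2 / (s - a) ^ 2) s := by
    intro s hs
    have hs0 : 0 < s := lt_trans ha hs.1
    have hsa : s - a ≠ 0 := by have := hs.1; intro h; linarith [sub_eq_zero.mp h]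
    have h1 : HasDerivAt (fun x : ℝ => x ^ γ) (γ * s ^ (γ - 1)) s := by
      simpa using Real.hasDerivAt_rpow_const (x := s) (p := γ) (Or.inl hs0.ne')
    have h2 : HasDerivAt (fun x : ℝ => 1 - a * x) (-a) s := by
      simpa using ((hasDerivAt_id s).const_mul a).const_sub 1
    have h3 : HasDerivAt (fun x : ℝ => x - a) 1 s := by
      simpa using (hasDerivAt_id s).sub_const a
    have h4 := ((h1.mul h2).div h3 hsa)
    refine h4.congr_deriv ?_
    simp only [Pi.mul_apply]
    have hsγ : s ^ γ = s ^ (γ - 1) * s := by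
      rw [Real.rpow_sub_one hs0.ne', div_mul_cancel₀ _ hs0.ne']
    rw [hsγ, hγ]
    field_simp
    ring
  refine ⟨hder, ?_⟩
  have hderiv_neg : ∀ s ∈ Set.Ioo a (1 / a), s ≠ 1 → deriv f s < 0 := by
    intro s hs hs1
    rw [(hder s hs).deriv]
    have hs0 : 0 < s := lt_trans ha hs.1
    apply div_neg_of_neg_of_pos
    · have h1 : 0 < s ^ (γ - 1) := Real.rpow_pos_of_pos hs0 _
      have hne : s - 1 ≠ 0 := sub_ne_zero.mpr hs1
      have h2 : 0 < (s - 1) ^ 2 := by positivity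
      nlinarith [mul_pos (mul_pos (mul_pos ha hγpos) h1) h2]
    · have h5 : 0 < s - a := sub_pos.mpr hs.1
      positivity
  have hcont : ContinuousOn f (Set.Ioo a (1 / a)) := fun s hs =>
    ((hder s hs).continuousAt).continuousWithinAt
  have hsub1 : Set.Ioc a 1 ⊆ Set.Ioo a (1 / a) := fun x hx =>
    ⟨hx.1, lt_of_le_of_lt hx.2 hinv⟩
  have hsub2 : Set.Ico 1 (1 / a) ⊆ Set.Ioo a (1 / a) := fun x hx =>
    ⟨lt_of_lt_of_le ha1 hx.1, hx.2⟩
  have hanti1 : StrictAntiOn f (Set.Ioc a 1) := by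
    apply strictAntiOn_of_deriv_neg (convex_Ioc a 1) (hcont.mono hsub1)
    intro x hx
    rw [interior_Ioc] at hx
    exact hderiv_neg x (hsub1 (Set.Ioo_subset_Ioc_self hx)) hx.2.ne
  have hanti2 : StrictAntiOn f (Set.Ico 1 (1 / a)) := by
    apply strictAntiOn_of_deriv_neg (convex_Ico 1 (1 / a)) (hcont.mono hsub2)
    intro x hx
    rw [interior_Ico] at hx
    exact hderiv_neg x (hsub2 (Set.Ioo_subset_Ico_self hx)) (ne_of_gt hx.1)
  have hanti : StrictAntiOn f (Set.Ioo a (1 / a)) := by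
    intro x hx y hy hxy
    rcases le_or_gt y 1 with hy1 | hy1
    · exact hanti1 ⟨hx.1, le_of_lt (lt_of_lt_of_le hxy hy1)⟩ ⟨hy.1, hy1⟩ hxy
    · rcases le_or_gt 1 x with hx1 | hx1
      · exact hanti2 ⟨hx1, hx.2⟩ ⟨le_of_lt hy1, hy.2⟩ hxy
      · calc f y < f 1 := hanti2 ⟨le_refl 1, hinv⟩ ⟨le_of_lt hy1, hy.2⟩ hy1
          _ < f x := hanti1 ⟨hx.1, le_of_lt hx1⟩ ⟨ha1, le_refl 1⟩ hx1
  have hf1 : f 1 = 1 := by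
    simp only [hf, Real.one_rpow, one_mul, mul_one]
    field_simp
  refine ⟨hanti, ?_, ?_⟩
  · intro s hs hs1
    have := hanti hs ⟨ha1, hinv⟩ hs1
    rw [hf1] at this
    exact this
  · intro s hs hs1
    have := hanti ⟨ha1, hinv⟩ hs hs1
    rw [hf1] at this
    exact this
end

section
/- Let a ∈ (0,1), γ = (1+a)/(1-a), and Γ(s) = s^γ * (1 - a*s)/(s - a). For s, t with s, t, st all in (a, 1/a), one has Γ(s)*Γ(t) < Γ(s*t) if and only if (1 - s*t)*(1 - s)*(1 - t) > 0. -/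
theorem Gamma_superadditive_iff (a : ℝ) (ha : 0 < a) (ha1 : a < 1) (s t : ℝ)
    (hs : s ∈ Set.Ioo a (1 / a)) (ht : t ∈ Set.Ioo a (1 / a))
    (hst : s * t ∈ Set.Ioo a (1 / a)) :
    (s ^ ((1 + a) / (1 - a)) * (1 - a * s) / (s - a)) *
        (t ^ ((1 + a) / (1 - a)) * (1 - a * t) / (t - a)) <
      (s * t) ^ ((1 + a) / (1 - a)) * (1 - a * (s * t)) / (s * t - a) ↔
    (1 - s * t) * (1 - s) * (1 - t) > 0 := by
  obtain ⟨hs1, hs2⟩ := hs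
  obtain ⟨ht1, ht2⟩ := ht
  obtain ⟨hst1, hst2⟩ := hst
  have hs0 : 0 < s := ha.trans hs1
  have ht0 : 0 < t := ha.trans ht1
  have hsa : 0 < s - a := by linarith
  have hta : 0 < t - a := by linarith
  have hsta : 0 < s * t - a := by linarith
  have h1s : 0 < 1 - a * s := by
    have := (lt_div_iff₀ ha).mp hs2; nlinarith
  have h1t : 0 < 1 - a * t := by
    have := (lt_div_iff₀ ha).mp ht2; nlinarith
  have h1st : 0 < 1 - a * (s * t) := by
    have := (lt_div_iff₀ ha).mp hst2; nlinarith
  have hP : 0 < s ^ ((1 + a) / (1 - a)) := Real.rpow_pos_of_pos hs0 _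
  have hQ : 0 < t ^ ((1 + a) / (1 - a)) := Real.rpow_pos_of_pos ht0 _
  rw [Real.mul_rpow hs0.le ht0.le]
  set P := s ^ ((1 + a) / (1 - a)) with hPdef
  set Q := t ^ ((1 + a) / (1 - a)) with hQdef
  rw [div_mul_div_comm, div_lt_div_iff₀ (by positivity) hsta]
  have hPQ : 0 < P * Q := mul_pos hP hQ
  have hc : 0 < P * Q * (a * (1 + a)) := by positivity
  have hid : P * Q * (1 - a * (s * t)) * ((s - a) * (t - a)) -
      P * (1 - a * s) * (Q * (1 - a * t)) * (s * t - a) =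
      P * Q * (a * (1 + a)) * ((1 - s * t) * (1 - s) * (1 - t)) := by ring
  constructor
  · intro h
    have h2 : 0 < P * Q * (a * (1 + a)) * ((1 - s * t) * (1 - s) * (1 - t)) := by
      rw [← hid]; linarith
    by_contra h'
    push_neg at h'
    nlinarith [mul_nonneg hc.le (neg_nonneg.mpr h')]
  · intro h
    nlinarith [mul_pos hc h]
end

section
/- For all real a with 0 < a < 1 and all real s with a < s < 1, the polynomial P(a,s) = 2a^2*s^3 − (10a^2 − 5a + 1)*s^2 + (8a^3 − 10a^2 + 14a − 6)*s − (6a^2 − 5a + 1) is strictly negative. -/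
theorem P_neg (a s : ℝ) (ha : 0 < a) (ha1 : a < 1) (hs : a < s) (hs1 : s < 1) :
    2 * a ^ 2 * s ^ 3 - (10 * a ^ 2 - 5 * a + 1) * s ^ 2 +
      (8 * a ^ 3 - 10 * a ^ 2 + 14 * a - 6) * s - (6 * a ^ 2 - 5 * a + 1) < 0 := by
  have hu : (0:ℝ) < 1 - s := by linarith
  have hv : (0:ℝ) < s - a := by linarith
  have hu1 : 1 - s < 1 := by linarith
  set u := 1 - s with hud
  set v := s - a with hvd
  have h1 : 0 < v ^ 3 * (1 - u) := by apply mul_pos (by positivity); linarith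
  have h2 : 0 < u * v ^ 2 * (6 - 5 * u) := by
    apply mul_pos (by positivity); linarith
  have h3 : 0 < u ^ 2 * v * (21 - 20 * u) := by
    apply mul_pos (by positivity); linarith
  have h4 : 0 < u ^ 3 * (2 * u ^ 2 - 8 * u + 7) := by
    apply mul_pos (by positivity); nlinarith [sq_nonneg u, sq_nonneg (1-u)]
  have h5 : 0 < u ^ 3 * v ^ 2 := by positivity
  have h6 : 0 < u ^ 4 * v := by positivity
  have key : 2 * a ^ 2 * s ^ 3 - (10 * a ^ 2 - 5 * a + 1) * s ^ 2 +
      (8 * a ^ 3 - 10 * a ^ 2 + 14 * a - 6) * s - (6 * a ^ 2 - 5 * a + 1)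
      = -(8 * (v ^ 3 * (1 - u)) + 4 * (u * v ^ 2 * (6 - 5 * u)) +
          u ^ 2 * v * (21 - 20 * u) + u ^ 3 * (2 * u ^ 2 - 8 * u + 7) +
          2 * (u ^ 3 * v ^ 2) + 4 * (u ^ 4 * v)) := by
    rw [hud, hvd]; ring
  rw [key]; linarith
end

section
/- Let a ∈ (0,1). For x > 1 and y > 1, define H(x,y) = κ[(xy−1)/sqrt(xy+a) − (x−1)/sqrt(x+a) − ((y−1)/sqrt(y+a))·sqrt((x+a*x^2)/(x+a))] where κ = sqrt(1−a). Then H(x,y) > 0 if and only if x*y*((1−a)^2*y − 4a^2) > 4a^2*(y+a), and H(x,y) < 0 if and only if x*y*((1−a)^2*y − 4a^2) < 4a^2*(y+a). -/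
set_option maxHeartbeats 1000000 in
theorem H_sign_iff (a : ℝ) (ha : 0 < a) (ha1 : a < 1) (x y : ℝ) (hx : 1 < x) (hy : 1 < y) :
    (Real.sqrt (1 - a) *
        ((x * y - 1) / Real.sqrt (x * y + a) - (x - 1) / Real.sqrt (x + a) -
          (y - 1) / Real.sqrt (y + a) * Real.sqrt ((x + a * x ^ 2) / (x + a))) > 0 ↔
      x * y * ((1 - a) ^ 2 * y - 4 * a ^ 2) > 4 * a ^ 2 * (y + a)) ∧
    (Real.sqrt (1 - a) *
        ((x * y - 1) / Real.sqrt (x * y + a) - (x - 1) / Real.sqrt (x + a) -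
          (y - 1) / Real.sqrt (y + a) * Real.sqrt ((x + a * x ^ 2) / (x + a))) < 0 ↔
      x * y * ((1 - a) ^ 2 * y - 4 * a ^ 2) < 4 * a ^ 2 * (y + a)) := by
  have sign_aux : ∀ s t : ℝ, 0 < s + t → 0 < s ^ 2 - t ^ 2 → 0 < s - t := by
    intro s t h1 h2; nlinarith
  have sign_aux2 : ∀ s t : ℝ, 0 < s + t → s ^ 2 - t ^ 2 < 0 → s - t < 0 := by
    intro s t h1 h2; nlinarith
  have root_aux : ∀ s t : ℝ, 0 < t → s ^ 2 < t ^ 2 → s < t := by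
    intro s t h1 h2; nlinarith
  have hx0 : (0:ℝ) < x := by linarith
  have hy0 : (0:ℝ) < y := by linarith
  have hxy1 : (1:ℝ) < x * y := one_lt_mul hx.le hy
  have hyy : (0:ℝ) ≤ y ^ 2 - y := by
    linarith only [mul_pos hy0 (show (0:ℝ) < y - 1 by linarith only [hy])]
  have hp : (0:ℝ) < x * y + a := by linarith only [hxy1, ha]
  have hq : (0:ℝ) < x + a := by linarith only [hx0, ha]
  have hr : (0:ℝ) < y + a := by linarith only [hy0, ha]
  have hwnum : (0:ℝ) < x + a * x ^ 2 := by
    have := mul_pos ha (pow_pos hx0 2); linarith only [this, hx0]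
  have hw0 : (0:ℝ) < (x + a * x ^ 2) / (x + a) := div_pos hwnum hq
  have hκ : 0 < Real.sqrt (1 - a) := Real.sqrt_pos.mpr (by linarith)
  set sp := Real.sqrt (x * y + a) with hspdef
  set sq := Real.sqrt (x + a) with hsqdef
  set sr := Real.sqrt (y + a) with hsrdef
  set sw := Real.sqrt ((x + a * x ^ 2) / (x + a)) with hswdef
  have hsp0 : 0 < sp := Real.sqrt_pos.mpr hp
  have hsq0 : 0 < sq := Real.sqrt_pos.mpr hq
  have hsr0 : 0 < sr := Real.sqrt_pos.mpr hr
  have hsw0 : 0 < sw := Real.sqrt_pos.mpr hw0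
  have hsp2 : sp ^ 2 = x * y + a := Real.sq_sqrt hp.le
  have hsq2 : sq ^ 2 = x + a := Real.sq_sqrt hq.le
  have hsr2 : sr ^ 2 = y + a := Real.sq_sqrt hr.le
  have hsw2 : sw ^ 2 = (x + a * x ^ 2) / (x + a) := Real.sq_sqrt hw0.le
  set A := (x * y - 1) / sp with hA
  set B := (x - 1) / sq with hB
  set C := (y - 1) / sr * sw with hC
  have hA0 : 0 < A := div_pos (by linarith only [hxy1]) hsp0
  have hB0 : 0 < B := div_pos (by linarith only [hx]) hsq0
  have hC0 : 0 < C := mul_pos (div_pos (by linarith only [hy]) hsr0) hsw0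
  have hA2 : A ^ 2 = (x * y - 1) ^ 2 / (x * y + a) := by rw [hA, div_pow, hsp2]
  have hB2 : B ^ 2 = (x - 1) ^ 2 / (x + a) := by rw [hB, div_pow, hsq2]
  have hC2 : C ^ 2 = (y - 1) ^ 2 / (y + a) * ((x + a * x ^ 2) / (x + a)) := by
    rw [hC, mul_pow, div_pow, hsr2, hsw2]
  -- A > B
  have hBA2 : B ^ 2 < A ^ 2 := by
    rw [hA2, hB2, div_lt_div_iff₀ hq hp]
    have hD1 : (0:ℝ) < x * (y - 1) * ((x ^ 2 * y - 1) + a * (x * (y + 1) - 2)) := by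
      apply mul_pos (mul_pos hx0 (by linarith only [hy]))
      have h1 : (0:ℝ) < x ^ 2 * y - 1 := by
        linarith only [one_lt_mul (one_lt_pow₀ hx (by norm_num : 2 ≠ 0)).le hy]
      have h2 : (0:ℝ) ≤ a * (x * (y + 1) - 2) := by
        apply mul_nonneg ha.le
        linarith only [hxy1, hx]
      linarith only [h1, h2]
    have hsub : 0 < (x * y - 1) ^ 2 * (x + a) - (x - 1) ^ 2 * (x * y + a) := by
      have e : (x * y - 1) ^ 2 * (x + a) - (x - 1) ^ 2 * (x * y + a) =
          x * (y - 1) * ((x ^ 2 * y - 1) + a * (x * (y + 1) - 2)) := by ring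
      rw [e]; exact hD1
    exact sub_pos.mp hsub
  have hBA : B < A := root_aux B A hA0 hBA2
  -- A > C
  have hCA2 : C ^ 2 < A ^ 2 := by
    rw [hA2, hC2, div_mul_div_comm, div_lt_div_iff₀ (mul_pos hr hq) hp]
    have hfac : (0:ℝ) < x * ((2 + a) * y ^ 2 - y) - (y + a) := by
      have hq2 : (0:ℝ) ≤ (2 + a) * y ^ 2 - y := by
        linarith only [hyy, mul_nonneg ha.le (sq_nonneg y), hy0]
      have h1 : (0:ℝ) ≤ (x - 1) * ((2 + a) * y ^ 2 - y) :=
        mul_nonneg (by linarith only [hx]) hq2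
      have haY : (0:ℝ) < a * (y ^ 2 - 1) := mul_pos ha (by linarith only [hyy, hy])
      linarith only [h1, haY, hyy]
    have t1 : (0:ℝ) < (x + a) * ((x - 1) * (x * ((2 + a) * y ^ 2 - y) - (y + a))) :=
      mul_pos hq (mul_pos (by linarith only [hx]) hfac)
    have t2 : (0:ℝ) ≤ (y - 1) ^ 2 * (x * y + a) * (x * ((x - 1) * (1 - a))) := by
      apply mul_nonneg (mul_nonneg (sq_nonneg _) hp.le)
      apply mul_nonneg hx0.le
      exact mul_nonneg (by linarith only [hx]) (by linarith only [ha1])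
    have hsub : 0 < (x * y - 1) ^ 2 * ((y + a) * (x + a)) -
        (y - 1) ^ 2 * (x + a * x ^ 2) * (x * y + a) := by
      have e : (x * y - 1) ^ 2 * ((y + a) * (x + a)) -
          (y - 1) ^ 2 * (x + a * x ^ 2) * (x * y + a) =
          (x + a) * ((x - 1) * (x * ((2 + a) * y ^ 2 - y) - (y + a))) +
            (y - 1) ^ 2 * (x * y + a) * (x * ((x - 1) * (1 - a))) := by ring
      rw [e]; exact add_pos_of_pos_of_nonneg t1 t2
    exact sub_pos.mp hsub
  have hCA : C < A := root_aux C A hA0 hCA2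
  have hABC1 : 0 < A - B + C := by linarith only [hBA, hC0]
  have hSpT : 0 < (A ^ 2 + B ^ 2 - C ^ 2) + 2 * (A * B) := by
    have e : (A ^ 2 + B ^ 2 - C ^ 2) + 2 * (A * B) = (A + B - C) * (A + B + C) := by ring
    rw [e]
    exact mul_pos (by linarith only [hCA, hB0]) (by linarith only [hA0, hB0, hC0])
  have hM : 0 < x * (y - 1) ^ 2 * (x - 1) ^ 2 * (x * y - 1) ^ 2 /
      ((x * y + a) * (x + a) * (y + a)) ^ 2 := by
    apply div_pos
    · exact mul_pos (mul_pos (mul_pos hx0 (pow_pos (by linarith only [hy]) 2))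
        (pow_pos (by linarith only [hx]) 2)) (pow_pos (by linarith only [hxy1]) 2)
    · exact pow_pos (mul_pos (mul_pos hp hq) hr) 2
  have key : (A ^ 2 + B ^ 2 - C ^ 2) ^ 2 - (2 * (A * B)) ^ 2 =
      (x * y * ((1 - a) ^ 2 * y - 4 * a ^ 2) - 4 * a ^ 2 * (y + a)) *
        (x * (y - 1) ^ 2 * (x - 1) ^ 2 * (x * y - 1) ^ 2 /
          ((x * y + a) * (x + a) * (y + a)) ^ 2) := by
    have hAB : (A * B) ^ 2 = (x * y - 1) ^ 2 * (x - 1) ^ 2 / ((x * y + a) * (x + a)) := by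
      rw [mul_pow, hA2, hB2]; rw [div_mul_div_comm]
    rw [hA2, hB2, hC2, mul_pow 2 (A * B), hAB]
    field_simp
    ring
  refine ⟨⟨fun h => ?_, fun hG => ?_⟩, ⟨fun h => ?_, fun hG => ?_⟩⟩
  · -- H > 0 → G > 0
    have h3 : 0 < A - B - C := by
      by_contra hc
      push_neg at hc
      exact absurd h (not_lt.mpr (mul_nonpos_of_nonneg_of_nonpos hκ.le hc))
    have h4 : 0 < (A ^ 2 + B ^ 2 - C ^ 2) - 2 * (A * B) := by
      have e : (A ^ 2 + B ^ 2 - C ^ 2) - 2 * (A * B) = (A - B - C) * (A - B + C) := by ring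
      rw [e]; exact mul_pos h3 hABC1
    have h6 : 0 < (A ^ 2 + B ^ 2 - C ^ 2) ^ 2 - (2 * (A * B)) ^ 2 := by
      have e : (A ^ 2 + B ^ 2 - C ^ 2) ^ 2 - (2 * (A * B)) ^ 2 =
          ((A ^ 2 + B ^ 2 - C ^ 2) - 2 * (A * B)) * ((A ^ 2 + B ^ 2 - C ^ 2) + 2 * (A * B)) := by
        ring
      rw [e]; exact mul_pos h4 hSpT
    rw [key] at h6
    by_contra hc
    push_neg at hc
    have hG0 : x * y * ((1 - a) ^ 2 * y - 4 * a ^ 2) - 4 * a ^ 2 * (y + a) ≤ 0 := by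
      linarith only [hc]
    exact absurd h6 (not_lt.mpr (mul_nonpos_of_nonpos_of_nonneg hG0 hM.le))
  · -- G > 0 → H > 0
    have hGpos : 0 < x * y * ((1 - a) ^ 2 * y - 4 * a ^ 2) - 4 * a ^ 2 * (y + a) := by
      linarith only [hG]
    have h6 : 0 < (A ^ 2 + B ^ 2 - C ^ 2) ^ 2 - (2 * (A * B)) ^ 2 := by
      rw [key]; exact mul_pos hGpos hM
    have h4 : 0 < (A ^ 2 + B ^ 2 - C ^ 2) - 2 * (A * B) :=
      sign_aux (A ^ 2 + B ^ 2 - C ^ 2) (2 * (A * B)) hSpT h6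
    have h4' : 0 < (A - B) ^ 2 - C ^ 2 := by
      have e : (A - B) ^ 2 - C ^ 2 = (A ^ 2 + B ^ 2 - C ^ 2) - 2 * (A * B) := by ring
      rw [e]; exact h4
    have h3 : 0 < A - B - C := by
      have := sign_aux (A - B) C hABC1 h4'
      linarith only [this]
    exact mul_pos hκ h3
  · -- H < 0 → G < 0
    have h3 : A - B - C < 0 := by
      by_contra hc
      push_neg at hc
      exact absurd h (not_lt.mpr (mul_nonneg hκ.le hc))
    have h4 : (A ^ 2 + B ^ 2 - C ^ 2) - 2 * (A * B) < 0 := by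
      have e : (A ^ 2 + B ^ 2 - C ^ 2) - 2 * (A * B) = (A - B - C) * (A - B + C) := by ring
      rw [e]; exact mul_neg_of_neg_of_pos h3 hABC1
    have h6 : (A ^ 2 + B ^ 2 - C ^ 2) ^ 2 - (2 * (A * B)) ^ 2 < 0 := by
      have e : (A ^ 2 + B ^ 2 - C ^ 2) ^ 2 - (2 * (A * B)) ^ 2 =
          ((A ^ 2 + B ^ 2 - C ^ 2) - 2 * (A * B)) * ((A ^ 2 + B ^ 2 - C ^ 2) + 2 * (A * B)) := by
        ring
      rw [e]; exact mul_neg_of_neg_of_pos h4 hSpT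
    rw [key] at h6
    by_contra hc
    push_neg at hc
    have hG0 : 0 ≤ x * y * ((1 - a) ^ 2 * y - 4 * a ^ 2) - 4 * a ^ 2 * (y + a) := by
      linarith only [hc]
    exact absurd h6 (not_lt.mpr (mul_nonneg hG0 hM.le))
  · -- G < 0 → H < 0
    have hGneg : x * y * ((1 - a) ^ 2 * y - 4 * a ^ 2) - 4 * a ^ 2 * (y + a) < 0 := by
      linarith only [hG]
    have h6 : (A ^ 2 + B ^ 2 - C ^ 2) ^ 2 - (2 * (A * B)) ^ 2 < 0 := by
      rw [key]; exact mul_neg_of_neg_of_pos hGneg hM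
    have h4 : (A ^ 2 + B ^ 2 - C ^ 2) - 2 * (A * B) < 0 :=
      sign_aux2 (A ^ 2 + B ^ 2 - C ^ 2) (2 * (A * B)) hSpT h6
    have h4' : (A - B) ^ 2 - C ^ 2 < 0 := by
      have e : (A - B) ^ 2 - C ^ 2 = (A ^ 2 + B ^ 2 - C ^ 2) - 2 * (A * B) := by ring
      rw [e]; exact h4
    have h3 : A - B - C < 0 := by
      have := sign_aux2 (A - B) C hABC1 h4'
      linarith only [this]
    exact mul_neg_of_pos_of_neg hκ h3
end

section
/- Let 0 < a ≤ 1/4 and κ = sqrt(1−a). Then for all x > 1 and y > 1, one has (xy−1)/sqrt(xy+a) > (x−1)/sqrt(x+a) + ((y−1)/sqrt(y+a))·sqrt((x+a*x^2)/(x+a)). -/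
set_option maxHeartbeats 1000000 in
theorem reflected_rarefaction (a : ℝ) (ha : 0 < a) (ha14 : a ≤ 1 / 4)
    (x y : ℝ) (hx : 1 < x) (hy : 1 < y) :
    (x * y - 1) / Real.sqrt (x * y + a) >
      (x - 1) / Real.sqrt (x + a) +
        (y - 1) / Real.sqrt (y + a) * Real.sqrt ((x + a * x ^ 2) / (x + a)) := by
  have hx0 : (0:ℝ) < x := by linarith
  have hy0 : (0:ℝ) < y := by linarith
  have hB : (0:ℝ) < x - 1 := by linarith
  have hC : (0:ℝ) < y - 1 := by linarith
  have hA : (0:ℝ) < x * y - 1 := by nlinarith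
  have ha1 : a < 1 := by linarith
  have hP : (0:ℝ) < x * y + a := by nlinarith
  have hQ : (0:ℝ) < x + a := by linarith
  have hR : (0:ℝ) < y + a := by linarith
  have hS : (0:ℝ) < x + a * x ^ 2 := by nlinarith
  set sP := Real.sqrt (x * y + a) with hsPdef
  set sQ := Real.sqrt (x + a) with hsQdef
  set sR := Real.sqrt (y + a) with hsRdef
  set sS := Real.sqrt (x + a * x ^ 2) with hsSdef
  have hsP : 0 < sP := Real.sqrt_pos.mpr hP
  have hsQ : 0 < sQ := Real.sqrt_pos.mpr hQ
  have hsR : 0 < sR := Real.sqrt_pos.mpr hR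
  have hsS : 0 < sS := Real.sqrt_pos.mpr hS
  have hsP2 : sP ^ 2 = x * y + a := Real.sq_sqrt hP.le
  have hsQ2 : sQ ^ 2 = x + a := Real.sq_sqrt hQ.le
  have hsR2 : sR ^ 2 = y + a := Real.sq_sqrt hR.le
  have hsS2 : sS ^ 2 = x + a * x ^ 2 := Real.sq_sqrt hS.le
  set v := sS / sR with hvdef
  have hv0 : 0 < v := div_pos hsS hsR
  have hv2 : v ^ 2 = (x + a * x ^ 2) / (y + a) := by
    rw [hvdef, div_pow, hsS2, hsR2]
  -- G positive
  have hG : 0 < x * y ^ 2 * (1 - a) ^ 2 - 4 * a ^ 2 * (x * y + y + a) := by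
    have hid : x * y ^ 2 * (1 - a) ^ 2 - 4 * a ^ 2 * (x * y + y + a)
        = (x-1)*y*((1-a)^2*y - 4*a^2) + (y-1)*((1-a)^2*(y+1) - 8*a^2)
          + (1-4*a)*(1+a)^2 := by ring
    have h1 : 0 < (1-a)^2*y - 4*a^2 := by nlinarith
    have h2 : 0 ≤ (1-a)^2*(y+1) - 8*a^2 := by nlinarith
    have h3 : 0 ≤ (1-4*a)*(1+a)^2 := by
      apply mul_nonneg (by linarith)
      positivity
    rw [hid]
    have := mul_pos (mul_pos hB hy0) h1
    have := mul_nonneg hC.le h2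
    linarith
  -- D positive
  set D := (x*y-1)^2*(x+a)*(y+a) - (x-1)^2*(x*y+a)*(y+a) - (y-1)^2*(x+a*x^2)*(x*y+a) with hDdef
  have hDfac : D = x*(x-1)*(y-1)*(2*a^2 + y + 3*a*y + 2*a*x*y + x*y^2*(1-a)) := by
    rw [hDdef]; ring
  have hD : 0 < D := by
    rw [hDfac]
    have hcore : 0 < 2*a^2 + y + 3*a*y + 2*a*x*y + x*y^2*(1-a) := by nlinarith
    exact mul_pos (mul_pos (mul_pos hx0 hB) hC) hcore
  have hPR : 0 < (x*y+a)*(y+a) := mul_pos hP hR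
  have hDPR : 0 < D / ((x*y+a)*(y+a)) := div_pos hD hPR
  -- the key squared inequality (second squaring)
  have hdiff : (D / ((x*y+a)*(y+a)))^2 - (2*(x-1)*(y-1)*v)^2
      = x*(x-1)^2*(y-1)^2*(x*y-1)^2*(x * y ^ 2 * (1 - a) ^ 2 - 4 * a ^ 2 * (x * y + y + a))
        / ((x*y+a)^2*(y+a)^2) := by
    rw [mul_pow (2*(x-1)*(y-1)) v, hv2, hDdef]
    field_simp
    ring
  have hnum : 0 < x*(x-1)^2*(y-1)^2*(x*y-1)^2*(x * y ^ 2 * (1 - a) ^ 2 - 4 * a ^ 2 * (x * y + y + a)) :=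
    mul_pos (mul_pos (mul_pos (mul_pos hx0 (pow_pos hB 2)) (pow_pos hC 2)) (pow_pos hA 2)) hG
  have hsq1 : (2*(x-1)*(y-1)*v)^2 < (D / ((x*y+a)*(y+a)))^2 := by
    have hfrac : 0 < x*(x-1)^2*(y-1)^2*(x*y-1)^2*(x * y ^ 2 * (1 - a) ^ 2 - 4 * a ^ 2 * (x * y + y + a))
        / ((x*y+a)^2*(y+a)^2) := div_pos hnum (by positivity)
    linarith [hdiff]
  have key1 : 2*(x-1)*(y-1)*v < D / ((x*y+a)*(y+a)) :=
    lt_of_pow_lt_pow_left₀ 2 hDPR.le hsq1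
  -- first squaring identity
  have heq2 : (x*y-1)^2*(x+a)/(x*y+a) - (x-1)^2 - (y-1)^2*((x + a*x^2)/(y+a))
      = D / ((x*y+a)*(y+a)) := by
    rw [hDdef]; field_simp
  have key2 : ((x-1) + (y-1)*v)^2 < (x*y-1)^2*(x+a)/(x*y+a) := by
    have expand : ((x-1) + (y-1)*v)^2
        = (x-1)^2 + (y-1)^2*((x + a*x^2)/(y+a)) + 2*(x-1)*(y-1)*v := by
      have : ((x-1) + (y-1)*v)^2 = (x-1)^2 + (y-1)^2*v^2 + 2*(x-1)*(y-1)*v := by ring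
      rw [this, hv2]
    rw [expand]
    linarith [key1, heq2]
  have hrhspos : 0 < (x*y-1)*sQ/sP := div_pos (mul_pos hA hsQ) hsP
  have key3 : (x-1) + (y-1)*v < (x*y-1)*sQ/sP := by
    apply lt_of_pow_lt_pow_left₀ 2 hrhspos.le
    have : ((x*y-1)*sQ/sP)^2 = (x*y-1)^2*(x+a)/(x*y+a) := by
      rw [div_pow, mul_pow, hsQ2, hsP2]
    rw [this]
    exact key2
  -- conclude
  have hsqrtdiv : Real.sqrt ((x + a * x ^ 2) / (x + a)) = sS / sQ := by
    rw [hsSdef, hsQdef]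
    exact Real.sqrt_div hS.le (x + a)
  rw [hsqrtdiv]
  have hrw : (x - 1) / sQ + (y - 1) / sR * (sS / sQ) = ((x-1) + (y-1)*v) / sQ := by
    rw [hvdef]
    field_simp
  rw [gt_iff_lt, hrw, div_lt_div_iff₀ hsQ hsP]
  calc ((x-1) + (y-1)*v) * sP < ((x*y-1)*sQ/sP) * sP := by
        exact mul_lt_mul_of_pos_right key3 hsP
    _ = (x*y-1) * sQ := by field_simp
end

section
/- Let a ∈ (0,1), ζ = a/(1+a). Define M(q) = q^ζ for 0 < q ≤ 1 and M(q) = sqrt((q + a*q^2)/(q + a)) for q ≥ 1, and define m(q) = q*M'(q)/M(q) (so m(q) = ζ for 0 < q < 1 and m(q) = a(1 + 2a*q + q^2)/(2(q+a)(1+aq)) for q > 1). Then m(q) < 1/2 for all q > 0, and m(q) ≥ ζ for all q > 0. -/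
theorem m_bounds (a : ℝ) (ha : 0 < a) (ha1 : a < 1) (q : ℝ) (hq : 0 < q) :
    (if q ≤ 1 then a / (1 + a)
      else a * (1 + 2 * a * q + q ^ 2) / (2 * (q + a) * (1 + a * q))) < 1 / 2 ∧
    (if q ≤ 1 then a / (1 + a)
      else a * (1 + 2 * a * q + q ^ 2) / (2 * (q + a) * (1 + a * q))) ≥ a / (1 + a) := by
  split_ifs with h
  · constructor
    · rw [div_lt_div_iff₀ (by linarith) (by norm_num)]; linarith
    · exact le_refl _
  · push_neg at h
    have hd : 0 < 2 * (q + a) * (1 + a * q) := by positivity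
    constructor
    · rw [div_lt_div_iff₀ hd (by norm_num)]; nlinarith [mul_pos hq (mul_pos (by linarith : (0:ℝ)<1-a) (by linarith : (0:ℝ)<1+a))]
    · rw [ge_iff_le, div_le_div_iff₀ (by linarith) hd]; nlinarith [mul_nonneg (mul_nonneg ha.le (by linarith : (0:ℝ) ≤ 1-a)) (sq_nonneg (q-1))]
end

section
/- Let a ∈ (0,1), γ = (1+a)/(1-a), and define D(q) = q^{1/γ} * (1 + a*q)/(q + a) for q > 0. Then D is strictly increasing on (0,∞), D(1) = 1, and D(q) → ∞ as q → ∞. -/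
open Real Filter Set

private lemma D_deriv (a x : ℝ) (ha : 0 < a) (ha1 : a < 1) (hx : 0 < x) :
    HasDerivAt (fun q : ℝ => q ^ ((1 - a) / (1 + a)) * ((1 + a * q) / (q + a)))
      (x ^ ((1 - a) / (1 + a) - 1) * (a * ((1 - a) / (1 + a)) * (x - 1) ^ 2) / (x + a) ^ 2) x := by
  have hxa : (0 : ℝ) < x + a := by linarith
  have h1 : HasDerivAt (fun q : ℝ => q ^ ((1 - a) / (1 + a)))
      ((1 - a) / (1 + a) * x ^ ((1 - a) / (1 + a) - 1)) x :=
    Real.hasDerivAt_rpow_const (Or.inl hx.ne')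
  have h2n : HasDerivAt (fun q : ℝ => 1 + a * q) a x := by
    have h := ((hasDerivAt_id' x).const_mul a).const_add 1
    rw [mul_one] at h
    exact h
  have h2d : HasDerivAt (fun q : ℝ => q + a) 1 x := (hasDerivAt_id x).add_const a
  have h2 : HasDerivAt (fun q : ℝ => (1 + a * q) / (q + a))
      ((a * (x + a) - (1 + a * x) * 1) / (x + a) ^ 2) x := h2n.div h2d hxa.ne'
  have h : HasDerivAt (fun q : ℝ => q ^ ((1 - a) / (1 + a)) * ((1 + a * q) / (q + a))) _ x := h1.mul h2
  convert h using 1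
  have hb : x ^ ((1 - a) / (1 + a)) = x ^ ((1 - a) / (1 + a) - 1) * x := by
    rw [← Real.rpow_add_one hx.ne']
    ring_nf
  rw [hb]
  have h1a : (0:ℝ) < 1 + a := by linarith
  field_simp
  ring

private lemma D_mono_aux (a : ℝ) (ha : 0 < a) (ha1 : a < 1) {s : Set ℝ}
    (hconv : Convex ℝ s) (hs : s ⊆ Set.Ioi 0) (hs1 : (1:ℝ) ∉ interior s) :
    StrictMonoOn (fun q : ℝ => q ^ ((1 - a) / (1 + a)) * ((1 + a * q) / (q + a))) s := by
  have hcont : ContinuousOn (fun q : ℝ => q ^ ((1 - a) / (1 + a)) * ((1 + a * q) / (q + a)))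
      (Set.Ioi 0) := by
    apply ContinuousOn.mul
    · exact ContinuousOn.rpow_const continuousOn_id fun x hx => Or.inl (ne_of_gt hx)
    · apply ContinuousOn.div
      · fun_prop
      · fun_prop
      · intro x hx
        have : (0:ℝ) < x := hx
        intro h; linarith
  apply strictMonoOn_of_deriv_pos hconv (hcont.mono hs)
  intro x hx
  have hx0 : 0 < x := hs (interior_subset hx)
  have hx1 : x ≠ 1 := fun h => hs1 (h ▸ hx)
  rw [(D_deriv a x ha ha1 hx0).deriv]
  have h1 : (0:ℝ) < x ^ ((1 - a) / (1 + a) - 1) := Real.rpow_pos_of_pos hx0 _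
  have h2 : (0:ℝ) < (x - 1) ^ 2 := by
    have : x - 1 ≠ 0 := sub_ne_zero.mpr hx1
    positivity
  have h3 : (0:ℝ) < (x + a) ^ 2 := by positivity
  have h4 : (0:ℝ) < (1 - a) / (1 + a) := by
    apply div_pos <;> linarith
  positivity

private lemma D_mono (a : ℝ) (ha : 0 < a) (ha1 : a < 1) :
    StrictMonoOn (fun q : ℝ => q ^ ((1 - a) / (1 + a)) * ((1 + a * q) / (q + a)))
      (Set.Ioi 0) := by
  have M1 := D_mono_aux a ha ha1 (convex_Ioc (0:ℝ) 1)
    (fun x hx => hx.1) (by simp [interior_Ioc])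
  have M2 := D_mono_aux a ha ha1 (convex_Ici (1:ℝ))
    (fun x hx => show (0:ℝ) < x from lt_of_lt_of_le one_pos hx) (by simp [interior_Ici])
  intro x hx y hy hxy
  rcases le_or_gt y 1 with hy1 | hy1
  · exact M1 ⟨hx, hxy.le.trans hy1⟩ ⟨hy, hy1⟩ hxy
  · rcases le_or_gt 1 x with hx1 | hx1
    · exact M2 hx1 (hx1.trans hxy.le) hxy
    · calc _ < _ := M1 ⟨hx, hx1.le⟩ ⟨one_pos, le_refl 1⟩ hx1
        _ < _ := M2 (Set.mem_Ici.mpr (le_refl (1:ℝ))) hy1.le hy1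

private lemma D_tendsto (a : ℝ) (ha : 0 < a) (ha1 : a < 1) :
    Filter.Tendsto (fun q : ℝ => q ^ ((1 - a) / (1 + a)) * ((1 + a * q) / (q + a)))
      Filter.atTop Filter.atTop := by
  have hβ : (0:ℝ) < (1 - a) / (1 + a) := by apply div_pos <;> linarith
  have h1 : Tendsto (fun q : ℝ => q ^ ((1 - a) / (1 + a))) atTop atTop :=
    tendsto_rpow_atTop hβ
  have h2 : Tendsto (fun q : ℝ => (1 + a * q) / (q + a)) atTop (nhds a) := by
    have hnum : Tendsto (fun q : ℝ => 1 / q + a) atTop (nhds (0 + a)) := by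
      simpa [one_div] using (tendsto_inv_atTop_zero (𝕜 := ℝ)).add
        (tendsto_const_nhds (x := a) (f := atTop))
    have hden : Tendsto (fun q : ℝ => 1 + a / q) atTop (nhds (1 + 0)) := by
      exact tendsto_const_nhds.add (Tendsto.div_atTop tendsto_const_nhds tendsto_id)
    have h := hnum.div hden (by norm_num)
    rw [show (0 + a) / (1 + 0) = a by norm_num] at h
    apply h.congr'
    filter_upwards [eventually_gt_atTop (0:ℝ)] with q hq
    have hqa : q + a ≠ 0 := by positivity
    show (1 / q + a) / (1 + a / q) = (1 + a * q) / (q + a)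
    field_simp
  exact Filter.Tendsto.atTop_mul_pos ha h1 h2

theorem D_properties (a : ℝ) (ha : 0 < a) (ha1 : a < 1) :
    StrictMonoOn
        (fun q : ℝ => q ^ (1 / ((1 + a) / (1 - a))) * ((1 + a * q) / (q + a)))
        (Set.Ioi 0) ∧
    (1 : ℝ) ^ (1 / ((1 + a) / (1 - a))) * ((1 + a * 1) / (1 + a)) = 1 ∧
    Filter.Tendsto
      (fun q : ℝ => q ^ (1 / ((1 + a) / (1 - a))) * ((1 + a * q) / (q + a)))
      Filter.atTop Filter.atTop := by
  have hβ : 1 / ((1 + a) / (1 - a)) = (1 - a) / (1 + a) := one_div_div _ _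
  rw [hβ]
  refine ⟨D_mono a ha ha1, ?_, D_tendsto a ha ha1⟩
  rw [Real.one_rpow, mul_one, div_self (by linarith), one_mul]
end

section
/- Let a ∈ (0,1), ζ = a/(1+a), κ = sqrt(1−a), ν = sqrt(1−a^2)/a, and define α(q) = ψ→(q) − ψ←(q) where ψ→(q) = ν(q^ζ − 1) for q ≥ 1, ψ→(q) = κ(q−1)/sqrt(q+a) for 0 < q ≤ 1, ψ←(q) = ν(q^ζ − 1) for 0 < q ≤ 1, and ψ←(q) = κ(q−1)/sqrt(q+a) for q ≥ 1. If a = 1/4 (i.e. γ = 5/3), then α(q) = 0 if and only if q = 1. -/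
lemma core_monatomic (t : ℝ) (ht : 0 < t) :
    Real.sqrt (3/4) * (t^5 - 1) / Real.sqrt (t^5 + 1/4)
      = Real.sqrt (15/16) / (1/4) * (t - 1) ↔ t = 1 := by
  have hs : (0:ℝ) < Real.sqrt (t^5 + 1/4) := Real.sqrt_pos.2 (by positivity)
  constructor
  · intro h
    have h2 : Real.sqrt (3/4) * (t^5 - 1)
        = Real.sqrt (15/16) / (1/4) * (t - 1) * Real.sqrt (t^5 + 1/4) := by
      rw [div_eq_iff (ne_of_gt hs)] at h
      linarith
    have h3 : (Real.sqrt (3/4) * (t^5 - 1))^2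
        = (Real.sqrt (15/16) / (1/4) * (t - 1) * Real.sqrt (t^5 + 1/4))^2 := by
      rw [h2]
    have e1 : Real.sqrt (3/4) ^ 2 = 3/4 := Real.sq_sqrt (by norm_num)
    have e2 : Real.sqrt (15/16) ^ 2 = 15/16 := Real.sq_sqrt (by norm_num)
    have e3 : Real.sqrt (t^5 + 1/4) ^ 2 = t^5 + 1/4 := Real.sq_sqrt (by positivity)
    have H : (3/4) * (t^5-1)^2 = 15 * (t-1)^2 * (t^5 + 1/4) := by
      have := h3
      rw [mul_pow, mul_pow, mul_pow, div_pow, e1, e2, e3] at this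
      nlinarith [this]
    have key : (t-1)^5 * (t^5+5*t^4+15*t^3+15*t^2+10*t+4) = 0 := by
      linear_combination (4/3) * H
    have hR : (0:ℝ) < t^5+5*t^4+15*t^3+15*t^2+10*t+4 := by positivity
    have h5 : (t-1)^5 = 0 := by
      rcases mul_eq_zero.1 key with h' | h'
      · exact h'
      · linarith
    have : t - 1 = 0 := pow_eq_zero_iff (by norm_num) |>.1 h5
    linarith
  · intro h
    subst h
    norm_num

theorem alpha_root_monatomic (q : ℝ) (hq : 0 < q) :
    (let a : ℝ := 1 / 4
     let ζ : ℝ := a / (1 + a)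
     let κ : ℝ := Real.sqrt (1 - a)
     let ν : ℝ := Real.sqrt (1 - a ^ 2) / a
     let ψfwd : ℝ → ℝ := fun q =>
       if q ≤ 1 then κ * (q - 1) / Real.sqrt (q + a) else ν * (q ^ ζ - 1)
     let ψbwd : ℝ → ℝ := fun q =>
       if q ≤ 1 then ν * (q ^ ζ - 1) else κ * (q - 1) / Real.sqrt (q + a)
     ψfwd q - ψbwd q = 0) ↔ q = 1 := by
  dsimp only
  have hζ : (1/4 : ℝ) / (1 + 1/4) = 1/5 := by norm_num
  set t : ℝ := q ^ ((1:ℝ)/5) with htdef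
  have ht : 0 < t := Real.rpow_pos_of_pos hq _
  have ht5 : t ^ 5 = q := by
    rw [htdef, ← Real.rpow_natCast (q ^ ((1:ℝ)/5)) 5, ← Real.rpow_mul hq.le]
    norm_num
  have hmain : Real.sqrt (1 - 1/4) * (q - 1) / Real.sqrt (q + 1/4)
      = Real.sqrt (1 - (1/4)^2) / (1/4) * (q ^ ((1/4:ℝ)/(1+1/4)) - 1) ↔ q = 1 := by
    have hnum1 : (1 : ℝ) - 1/4 = 3/4 := by norm_num
    have hnum2 : (1 : ℝ) - (1/4)^2 = 15/16 := by norm_num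
    rw [hnum1, hnum2, hζ, ← htdef, ← ht5]
    refine (core_monatomic t ht).trans ⟨fun h => by rw [h]; norm_num, fun h => ?_⟩
    have hfac : (t - 1) * (t^4 + t^3 + t^2 + t + 1) = 0 := by linear_combination h
    have hpos : (0:ℝ) < t^4 + t^3 + t^2 + t + 1 := by positivity
    rcases mul_eq_zero.1 hfac with h' | h'
    · linarith
    · linarith
  constructor
  · intro hα
    split_ifs at hα with hle
    · exact hmain.1 (by linarith [sub_eq_zero.1 hα])
    · exact hmain.1 (sub_eq_zero.1 hα).symm
  · intro h
    subst h
    norm_num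
end

section
/- Let 0 < a < 1/4, ζ = a/(1+a), κ = sqrt(1−a), ν = sqrt(1−a^2)/a, and α(q) = ψ→(q) − ψ←(q) as defined from the wave-curve velocity functions (ψ→(q) = ν(q^ζ−1) for q ≥ 1 and κ(q−1)/sqrt(q+a) for q ≤ 1; ψ← with the two branches interchanged). Then α has exactly two zeros in (0,∞): one at q = 1 and one at some y₀ ∈ (0,1). -/
open Real Set

/-! Auxiliary chain of generalized polynomials implementing a Descartes-rule
argument for `H(q) = a²(q-1)² - (1+a)(q+a)(q^t-1)²` with `t = a/(1+a)`. -/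

noncomputable def P0 (a t q : ℝ) : ℝ :=
  -a + 2*a*(1+a) * q ^ t - a*(1+a) * q ^ (2*t) - (1+a+2*a^2) * q
    + 2*(1+a) * q ^ (t+1) - (1+a) * q ^ (2*t+1) + a^2 * q ^ (2:ℝ)

noncomputable def P1 (a t q : ℝ) : ℝ :=
  2*a*(1+a)*t - 2*a*(1+a)*t * q ^ t - (1+a+2*a^2) * q ^ (1-t) + 2*(1+a)*(t+1) * q
    - (1+a)*(2*t+1) * q ^ (t+1) + 2*a^2 * q ^ (2-t)

noncomputable def P2 (a t q : ℝ) : ℝ :=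
  -(2*a*(1+a)*t^2) * q ^ (2*t-1) - (1+a+2*a^2)*(1-t) + 2*(1+a)*(t+1) * q ^ t
    - (1+a)*(2*t+1)*(t+1) * q ^ (2*t) + 2*a^2*(2-t) * q

noncomputable def P3 (a t q : ℝ) : ℝ :=
  -(2*a*(1+a)*t^2*(2*t-1)) * q ^ (t-1) + 2*(1+a)*(t+1)*t
    - 2*(1+a)*(2*t+1)*(t+1)*t * q ^ t + 2*a^2*(2-t) * q ^ (1-t)

noncomputable def P4 (a t q : ℝ) : ℝ :=
  -(2*a*(1+a)*t^2*(2*t-1)*(t-1)) * q ^ (-1:ℝ) - 2*(1+a)*(2*t+1)*(t+1)*t^2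
    + 2*a^2*(2-t)*(1-t) * q ^ (1-2*t)

noncomputable def P5 (a t q : ℝ) : ℝ :=
  2*a*(1+a)*t^2*(2*t-1)*(t-1) * q ^ (-2:ℝ) + 2*a^2*(2-t)*(1-t)*(1-2*t) * q ^ (-(2*t))

lemma hasDerivP0 (a t : ℝ) {q : ℝ} (hq : 0 < q) :
    HasDerivAt (P0 a t) (q ^ (t-1) * P1 a t q) q := by
  have hne : q ≠ 0 := ne_of_gt hq
  have h := ((((((hasDerivAt_const q (-a)).add
      ((Real.hasDerivAt_rpow_const (p := t) (Or.inl hne)).const_mul (2*a*(1+a)))).sub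
      ((Real.hasDerivAt_rpow_const (p := 2*t) (Or.inl hne)).const_mul (a*(1+a)))).sub
      ((hasDerivAt_id q).const_mul (1+a+2*a^2))).add
      ((Real.hasDerivAt_rpow_const (p := t+1) (Or.inl hne)).const_mul (2*(1+a)))).sub
      ((Real.hasDerivAt_rpow_const (p := 2*t+1) (Or.inl hne)).const_mul (1+a))).add
      ((Real.hasDerivAt_rpow_const (p := (2:ℝ)) (Or.inl hne)).const_mul (a^2))
  refine h.congr_deriv ?_
  simp only [P1]
  simp only [show (2:ℝ)*t = t+t from by ring]
  simp only [show (2:ℝ) = 1+1 from by norm_num]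
  simp only [Real.rpow_add hq, Real.rpow_sub hq, Real.rpow_neg hq.le, Real.rpow_one,
    Real.rpow_zero]
  field_simp
  ring

lemma hasDerivP1 (a t : ℝ) {q : ℝ} (hq : 0 < q) :
    HasDerivAt (P1 a t) (q ^ (-t) * P2 a t q) q := by
  have hne : q ≠ 0 := ne_of_gt hq
  have h := (((((hasDerivAt_const q (2*a*(1+a)*t)).sub
      ((Real.hasDerivAt_rpow_const (p := t) (Or.inl hne)).const_mul (2*a*(1+a)*t))).sub
      ((Real.hasDerivAt_rpow_const (p := 1-t) (Or.inl hne)).const_mul (1+a+2*a^2))).add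
      ((hasDerivAt_id q).const_mul (2*(1+a)*(t+1)))).sub
      ((Real.hasDerivAt_rpow_const (p := t+1) (Or.inl hne)).const_mul ((1+a)*(2*t+1)))).add
      ((Real.hasDerivAt_rpow_const (p := 2-t) (Or.inl hne)).const_mul (2*a^2))
  refine h.congr_deriv ?_
  simp only [P2]
  simp only [show (2:ℝ)*t = t+t from by ring]
  simp only [show (2:ℝ) = 1+1 from by norm_num]
  simp only [Real.rpow_add hq, Real.rpow_sub hq, Real.rpow_neg hq.le, Real.rpow_one,
    Real.rpow_zero]
  field_simp
  ring

lemma hasDerivP2 (a t : ℝ) {q : ℝ} (hq : 0 < q) :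
    HasDerivAt (P2 a t) (q ^ (t-1) * P3 a t q) q := by
  have hne : q ≠ 0 := ne_of_gt hq
  have h := (((((Real.hasDerivAt_rpow_const (p := 2*t-1) (Or.inl hne)).const_mul
      (-(2*a*(1+a)*t^2))).sub
      (hasDerivAt_const q ((1+a+2*a^2)*(1-t)))).add
      ((Real.hasDerivAt_rpow_const (p := t) (Or.inl hne)).const_mul (2*(1+a)*(t+1)))).sub
      ((Real.hasDerivAt_rpow_const (p := 2*t) (Or.inl hne)).const_mul ((1+a)*(2*t+1)*(t+1)))).add
      ((hasDerivAt_id q).const_mul (2*a^2*(2-t)))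
  refine h.congr_deriv ?_
  simp only [P3]
  simp only [show (2:ℝ)*t = t+t from by ring]
  simp only [show (2:ℝ) = 1+1 from by norm_num]
  simp only [Real.rpow_add hq, Real.rpow_sub hq, Real.rpow_neg hq.le, Real.rpow_one,
    Real.rpow_zero]
  field_simp
  ring

lemma hasDerivP3 (a t : ℝ) {q : ℝ} (hq : 0 < q) :
    HasDerivAt (P3 a t) (q ^ (t-1) * P4 a t q) q := by
  have hne : q ≠ 0 := ne_of_gt hq
  have h := ((((Real.hasDerivAt_rpow_const (p := t-1) (Or.inl hne)).const_mul
      (-(2*a*(1+a)*t^2*(2*t-1)))).add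
      (hasDerivAt_const q (2*(1+a)*(t+1)*t))).sub
      ((Real.hasDerivAt_rpow_const (p := t) (Or.inl hne)).const_mul
        (2*(1+a)*(2*t+1)*(t+1)*t))).add
      ((Real.hasDerivAt_rpow_const (p := 1-t) (Or.inl hne)).const_mul (2*a^2*(2-t)))
  refine h.congr_deriv ?_
  simp only [P4]
  simp only [show (2:ℝ)*t = t+t from by ring]
  simp only [show (-1:ℝ) = 0-1 from by norm_num]
  simp only [Real.rpow_add hq, Real.rpow_sub hq, Real.rpow_neg hq.le, Real.rpow_one,
    Real.rpow_zero]
  field_simp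
  ring

lemma hasDerivP4 (a t : ℝ) {q : ℝ} (hq : 0 < q) :
    HasDerivAt (P4 a t) (q ^ (0:ℝ) * P5 a t q) q := by
  have hne : q ≠ 0 := ne_of_gt hq
  have h := (((Real.hasDerivAt_rpow_const (p := (-1:ℝ)) (Or.inl hne)).const_mul
      (-(2*a*(1+a)*t^2*(2*t-1)*(t-1)))).sub
      (hasDerivAt_const q (2*(1+a)*(2*t+1)*(t+1)*t^2))).add
      ((Real.hasDerivAt_rpow_const (p := 1-2*t) (Or.inl hne)).const_mul (2*a^2*(2-t)*(1-t)))
  refine h.congr_deriv ?_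
  simp only [P5]
  simp only [show (2:ℝ)*t = t+t from by ring]
  simp only [show (-1:ℝ) = 0-1 from by norm_num, show (-2:ℝ) = 0-1-1 from by norm_num]
  simp only [Real.rpow_add hq, Real.rpow_sub hq, Real.rpow_neg hq.le, Real.rpow_one,
    Real.rpow_zero]
  field_simp
  ring

lemma P0_one (a t : ℝ) : P0 a t 1 = 0 := by
  simp only [P0, Real.one_rpow]; ring

lemma P1_one (a t : ℝ) : P1 a t 1 = 0 := by
  simp only [P1, Real.one_rpow]; ring

lemma P2_one (a : ℝ) (h1a : (1:ℝ)+a ≠ 0) : P2 a (a/(1+a)) 1 = 0 := by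
  simp only [P2, Real.one_rpow]; field_simp; ring

lemma P3_one (a : ℝ) (h1a : (1:ℝ)+a ≠ 0) : P3 a (a/(1+a)) 1 = 0 := by
  simp only [P3, Real.one_rpow]; field_simp; ring

lemma P4_one_pos (a : ℝ) (ha : 0 < a) (ha14 : a < 1/4) : 0 < P4 a (a/(1+a)) 1 := by
  have h1a : (0:ℝ) < 1+a := by linarith
  have key : P4 a (a/(1+a)) 1 = 2*a^2*(1-4*a)/(1+a)^2 := by
    simp only [P4, Real.one_rpow]; field_simp; ring
  rw [key]
  have h1 : 0 < 2*a^2*(1-4*a) := mul_pos (by positivity) (by linarith)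
  exact div_pos h1 (by positivity)

lemma P5_pos (a t q : ℝ) (ha : 0 < a) (h1a : (0:ℝ) < 1+a) (ht0 : 0 < t) (ht2 : t < 1/2)
    (hq : 0 < q) : 0 < P5 a t q := by
  have h1 : 0 < 2*a*(1+a)*t^2 := by positivity
  have h2 : 0 < (2*t-1)*(t-1) := mul_pos_of_neg_of_neg (by linarith) (by linarith)
  have hA : 0 < 2*a*(1+a)*t^2*(2*t-1)*(t-1) := by
    calc (0:ℝ) < (2*a*(1+a)*t^2)*((2*t-1)*(t-1)) := mul_pos h1 h2
      _ = 2*a*(1+a)*t^2*(2*t-1)*(t-1) := by ring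
  have hB : 0 < 2*a^2*(2-t)*(1-t)*(1-2*t) := by
    have h3 : 0 < (2*a^2)*((2-t)*((1-t)*(1-2*t))) := by
      apply mul_pos (by positivity)
      exact mul_pos (by linarith) (mul_pos (by linarith) (by linarith))
    calc (0:ℝ) < (2*a^2)*((2-t)*((1-t)*(1-2*t))) := h3
      _ = 2*a^2*(2-t)*(1-t)*(1-2*t) := by ring
  simp only [P5]
  exact add_pos (mul_pos hA (Real.rpow_pos_of_pos hq _))
    (mul_pos hB (Real.rpow_pos_of_pos hq _))

lemma P0_eq (a t q : ℝ) (hq : 0 < q) :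
    P0 a t q = a^2*(q-1)^2 - (1+a)*(q+a)*(q^t-1)^2 := by
  simp only [P0]
  simp only [show (2:ℝ)*t = t+t from by ring]
  simp only [show (2:ℝ) = 1+1 from by norm_num]
  simp only [Real.rpow_add hq, Real.rpow_one]
  ring

lemma P0_zero (a t : ℝ) (ht0 : 0 < t) : P0 a t 0 = -a := by
  simp only [P0]
  rw [Real.zero_rpow ht0.ne', Real.zero_rpow (by positivity : 2*t ≠ 0),
    Real.zero_rpow (by positivity : t+1 ≠ 0), Real.zero_rpow (by positivity : 2*t+1 ≠ 0),
    Real.zero_rpow (by norm_num : (2:ℝ) ≠ 0)]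
  ring

lemma P0_contAt (a t : ℝ) (ht0 : 0 < t) (x : ℝ) : ContinuousAt (P0 a t) x := by
  have h : ∀ e : ℝ, 0 ≤ e → ContinuousAt (fun y : ℝ => y ^ e) x := fun e he =>
    Real.continuousAt_rpow_const x e (Or.inr he)
  exact (((((continuousAt_const.add (continuousAt_const.mul (h t ht0.le))).sub
    (continuousAt_const.mul (h (2*t) (by linarith)))).sub
    (continuousAt_const.mul continuousAt_id)).add
    (continuousAt_const.mul (h (t+1) (by linarith)))).sub
    (continuousAt_const.mul (h (2*t+1) (by linarith)))).add
    (continuousAt_const.mul (h 2 (by norm_num)))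

/-- Rolle-type step: between consecutive zeros of `f` lies a zero of `g`,
where `f' = q^d * g`. -/
lemma rolle_step {f g : ℝ → ℝ} {d : ℝ}
    (hder : ∀ q : ℝ, 0 < q → HasDerivAt f (q ^ d * g q) q)
    {p r : ℝ} (hp : 0 < p) (hpr : p < r) (hfp : f p = 0) (hfr : f r = 0) :
    ∃ c, c ∈ Ioo p r ∧ g c = 0 := by
  have hcont : ContinuousOn f (Icc p r) := fun x hx =>
    ((hder x (lt_of_lt_of_le hp hx.1)).continuousAt).continuousWithinAt
  obtain ⟨c, hc, hc0⟩ := exists_hasDerivAt_eq_zero hpr hcont (hfp.trans hfr.symm)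
    (fun x hx => hder x (hp.trans hx.1))
  refine ⟨c, hc, ?_⟩
  have hcp : (0:ℝ) < c ^ d := Real.rpow_pos_of_pos (hp.trans hc.1) d
  rcases mul_eq_zero.mp hc0 with h | h
  · exact absurd h hcp.ne'
  · exact h

lemma three_zeros {f g : ℝ → ℝ} {d : ℝ}
    (hder : ∀ q : ℝ, 0 < q → HasDerivAt f (q ^ d * g q) q)
    (hg1 : g 1 = 0) {p₁ p₂ p₃ : ℝ} (hp1 : 0 < p₁) (h12 : p₁ < p₂) (h23 : p₂ < p₃)
    (hz1 : f p₁ = 0) (hz2 : f p₂ = 0) (hz3 : f p₃ = 0) (hone : p₂ = 1 ∨ p₃ = 1) :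
    ∃ r₁ r₂ r₃ : ℝ, 0 < r₁ ∧ r₁ < r₂ ∧ r₂ < r₃ ∧
      g r₁ = 0 ∧ g r₂ = 0 ∧ g r₃ = 0 ∧ (r₂ = 1 ∨ r₃ = 1) := by
  obtain ⟨c₁, hc₁, hgc₁⟩ := rolle_step hder hp1 h12 hz1 hz2
  obtain ⟨c₂, hc₂, hgc₂⟩ := rolle_step hder (hp1.trans h12) h23 hz2 hz3
  rcases hone with h1 | h1
  · refine ⟨c₁, 1, c₂, hp1.trans hc₁.1, ?_, ?_, hgc₁, hg1, hgc₂, Or.inl rfl⟩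
    · rw [← h1]; exact hc₁.2
    · rw [← h1]; exact hc₂.1
  · refine ⟨c₁, c₂, 1, hp1.trans hc₁.1, hc₁.2.trans hc₂.1, ?_, hgc₁, hgc₂, hg1, Or.inr rfl⟩
    rw [← h1]; exact hc₂.2

lemma no_three (a t : ℝ) (ha : 0 < a) (ha14 : a < 1/4) (ht : t = a/(1+a))
    {p₁ p₂ p₃ : ℝ} (hp1 : 0 < p₁) (h12 : p₁ < p₂) (h23 : p₂ < p₃)
    (hz1 : P0 a t p₁ = 0) (hz2 : P0 a t p₂ = 0) (hz3 : P0 a t p₃ = 0)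
    (hone : p₂ = 1 ∨ p₃ = 1) : False := by
  have h1a : (0:ℝ) < 1+a := by linarith
  have ht0 : 0 < t := by rw [ht]; exact div_pos ha h1a
  have ht2 : t < 1/2 := by
    rw [ht, div_lt_iff₀ h1a]; linarith
  have hP2one : P2 a t 1 = 0 := by rw [ht]; exact P2_one a h1a.ne'
  have hP3one : P3 a t 1 = 0 := by rw [ht]; exact P3_one a h1a.ne'
  obtain ⟨r₁, r₂, r₃, hr1, hr12, hr23, hgr1, hgr2, hgr3, hrone⟩ :=
    three_zeros (fun q hq => hasDerivP0 a t hq) (P1_one a t) hp1 h12 h23 hz1 hz2 hz3 hone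
  obtain ⟨s₁, s₂, s₃, hs1, hs12, hs23, hgs1, hgs2, hgs3, hsone⟩ :=
    three_zeros (fun q hq => hasDerivP1 a t hq) hP2one hr1 hr12 hr23 hgr1 hgr2 hgr3 hrone
  obtain ⟨u₁, u₂, u₃, hu1, hu12, hu23, hgu1, hgu2, hgu3, _⟩ :=
    three_zeros (fun q hq => hasDerivP2 a t hq) hP3one hs1 hs12 hs23 hgs1 hgs2 hgs3 hsone
  obtain ⟨v₁, hv₁, hP4v₁⟩ := rolle_step (fun q hq => hasDerivP3 a t hq) hu1 hu12 hgu1 hgu2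
  obtain ⟨v₂, hv₂, hP4v₂⟩ := rolle_step (fun q hq => hasDerivP3 a t hq) (hu1.trans hu12)
    hu23 hgu2 hgu3
  obtain ⟨v, hv, hP5v⟩ := rolle_step (fun q hq => hasDerivP4 a t hq) (hu1.trans hv₁.1)
    (hv₁.2.trans hv₂.1) hP4v₁ hP4v₂
  exact absurd hP5v (P5_pos a t v ha h1a ht0 ht2 (hu1.trans (hv₁.1.trans hv.1))).ne'

lemma left_neg (f g : ℝ → ℝ) (d : ℝ) {c : ℝ} (hc : 0 < c) (hc1 : c < 1)
    (hder : ∀ q : ℝ, 0 < q → HasDerivAt f (q ^ d * g q) q)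
    (hgpos : ∀ x ∈ Ioo c 1, 0 < g x) (hf1 : f 1 = 0) :
    ∀ x ∈ Ioo c 1, f x < 0 := by
  have hmono : StrictMonoOn f (Icc c 1) := by
    apply strictMonoOn_of_deriv_pos (convex_Icc c 1)
    · intro x hx
      exact (hder x (lt_of_lt_of_le hc hx.1)).continuousAt.continuousWithinAt
    · intro x hx
      rw [interior_Icc] at hx
      rw [(hder x (hc.trans hx.1)).deriv]
      exact mul_pos (Real.rpow_pos_of_pos (hc.trans hx.1) d) (hgpos x hx)
  intro x hx
  have h := hmono (Ioo_subset_Icc_self hx) (right_mem_Icc.mpr hc1.le) hx.2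
  rwa [hf1] at h

lemma left_pos (f g : ℝ → ℝ) (d : ℝ) {c : ℝ} (hc : 0 < c) (hc1 : c < 1)
    (hder : ∀ q : ℝ, 0 < q → HasDerivAt f (q ^ d * g q) q)
    (hgneg : ∀ x ∈ Ioo c 1, g x < 0) (hf1 : f 1 = 0) :
    ∀ x ∈ Ioo c 1, 0 < f x := by
  have hmono : StrictAntiOn f (Icc c 1) := by
    apply strictAntiOn_of_deriv_neg (convex_Icc c 1)
    · intro x hx
      exact (hder x (lt_of_lt_of_le hc hx.1)).continuousAt.continuousWithinAt
    · intro x hx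
      rw [interior_Icc] at hx
      rw [(hder x (hc.trans hx.1)).deriv]
      exact mul_neg_of_pos_of_neg (Real.rpow_pos_of_pos (hc.trans hx.1) d) (hgneg x hx)
  intro x hx
  have h := hmono (Ioo_subset_Icc_self hx) (right_mem_Icc.mpr hc1.le) hx.2
  rwa [hf1] at h

lemma bridge_mp (a t q : ℝ) (ha : 0 < a) (ha1 : a < 1) (hq : 0 < q)
    (h : Real.sqrt (1-a) * (q-1) / Real.sqrt (q+a) = Real.sqrt (1-a^2) / a * (q^t-1)) :
    P0 a t q = 0 := by
  have hqa : (0:ℝ) < q + a := by linarith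
  have h1a2 : (0:ℝ) ≤ 1 - a^2 := by nlinarith
  have e1 : (Real.sqrt (1-a) * (q-1) / Real.sqrt (q+a))^2 = (1-a)*(q-1)^2/(q+a) := by
    rw [div_pow, mul_pow, Real.sq_sqrt (by linarith : (0:ℝ) ≤ 1-a), Real.sq_sqrt hqa.le]
  have e2 : (Real.sqrt (1-a^2) / a * (q^t-1))^2 = (1-a^2)*(q^t-1)^2/a^2 := by
    rw [mul_pow, div_pow, Real.sq_sqrt h1a2]; ring
  have h2 : (1-a)*(q-1)^2/(q+a) = (1-a^2)*(q^t-1)^2/a^2 := by rw [← e1, ← e2, h]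
  have h3 : (1-a)*(q-1)^2 * a^2 = (1-a^2)*(q^t-1)^2 * (q+a) :=
    (div_eq_div_iff hqa.ne' (by positivity)).mp h2
  have key : a^2*(q-1)^2 = (1+a)*(q+a)*(q^t-1)^2 := by
    have h1an : (1:ℝ)-a ≠ 0 := by linarith
    apply mul_left_cancel₀ h1an
    linear_combination h3
  rw [P0_eq a t q hq]
  linarith [key]

lemma bridge_mpr (a t q : ℝ) (ha : 0 < a) (ha1 : a < 1) (ht0 : 0 < t) (hq : 0 < q)
    (h : P0 a t q = 0) :
    Real.sqrt (1-a) * (q-1) / Real.sqrt (q+a) = Real.sqrt (1-a^2) / a * (q^t-1) := by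
  have hqa : (0:ℝ) < q + a := by linarith
  have h1a2 : (0:ℝ) ≤ 1 - a^2 := by nlinarith
  have key : a^2*(q-1)^2 = (1+a)*(q+a)*(q^t-1)^2 := by
    rw [P0_eq a t q hq] at h; linarith [h]
  have e1 : (Real.sqrt (1-a) * (q-1) / Real.sqrt (q+a))^2 = (1-a)*(q-1)^2/(q+a) := by
    rw [div_pow, mul_pow, Real.sq_sqrt (by linarith : (0:ℝ) ≤ 1-a), Real.sq_sqrt hqa.le]
  have e2 : (Real.sqrt (1-a^2) / a * (q^t-1))^2 = (1-a^2)*(q^t-1)^2/a^2 := by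
    rw [mul_pow, div_pow, Real.sq_sqrt h1a2]; ring
  set x := Real.sqrt (1-a) * (q-1) / Real.sqrt (q+a) with hx
  set y := Real.sqrt (1-a^2) / a * (q^t-1) with hy
  have hx2 : x^2 = y^2 := by
    rw [e1, e2, div_eq_div_iff hqa.ne' (by positivity : (a:ℝ)^2 ≠ 0)]
    linear_combination (1-a) * key
  have hfac : (x - y) * (x + y) = 0 := by linear_combination hx2
  have hsa : 0 < Real.sqrt (1-a) := Real.sqrt_pos.mpr (by linarith)
  have hsqa : 0 < Real.sqrt (q+a) := Real.sqrt_pos.mpr hqa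
  have hsa2 : 0 < Real.sqrt (1-a^2) := Real.sqrt_pos.mpr (by nlinarith)
  rcases lt_trichotomy q 1 with hlt | heq | hgt
  · have hxn : x < 0 := by
      rw [hx]
      apply div_neg_of_neg_of_pos _ hsqa
      exact mul_neg_of_pos_of_neg hsa (by linarith)
    have hyn : y < 0 := by
      rw [hy]
      apply mul_neg_of_pos_of_neg (div_pos hsa2 ha)
      have : q ^ t < 1 := Real.rpow_lt_one hq.le hlt ht0
      linarith
    rcases mul_eq_zero.mp hfac with h' | h'
    · linarith [sub_eq_zero.mp h']
    · linarith [h']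
  · rw [hx, hy, heq]
    simp [Real.one_rpow]
  · have hxn : 0 < x := by
      rw [hx]
      apply div_pos _ hsqa
      exact mul_pos hsa (by linarith)
    have hyn : 0 < y := by
      rw [hy]
      apply mul_pos (div_pos hsa2 ha)
      have : (1:ℝ) < q ^ t := Real.one_lt_rpow_iff_of_pos hq |>.mpr (Or.inl ⟨hgt, ht0⟩)
      linarith
    rcases mul_eq_zero.mp hfac with h' | h'
    · linarith [sub_eq_zero.mp h']
    · linarith [h']

theorem alpha_two_roots (a : ℝ) (ha : 0 < a) (ha14 : a < 1 / 4) :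
    ∃ y₀ : ℝ, y₀ ∈ Set.Ioo (0 : ℝ) 1 ∧
      (let ζ : ℝ := a / (1 + a)
       let κ : ℝ := Real.sqrt (1 - a)
       let ν : ℝ := Real.sqrt (1 - a ^ 2) / a
       let α : ℝ → ℝ := fun q =>
         (if q ≤ 1 then κ * (q - 1) / Real.sqrt (q + a) else ν * (q ^ ζ - 1)) -
           (if q ≤ 1 then ν * (q ^ ζ - 1) else κ * (q - 1) / Real.sqrt (q + a))
       α y₀ = 0 ∧ α 1 = 0 ∧ ∀ q : ℝ, 0 < q → α q = 0 → q = 1 ∨ q = y₀) := by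
  have h1a : (0:ℝ) < 1 + a := by linarith
  set t : ℝ := a / (1 + a) with ht
  have ht0 : 0 < t := div_pos ha h1a
  have ha1 : a < 1 := by linarith
  -- sign of P0 just to the left of 1
  have h41 : 0 < P4 a t 1 := by rw [ht]; exact P4_one_pos a ha ha14
  have hP3one : P3 a t 1 = 0 := by rw [ht]; exact P3_one a h1a.ne'
  have hP2one : P2 a t 1 = 0 := by rw [ht]; exact P2_one a h1a.ne'
  have hct : ContinuousAt (P4 a t) 1 := (hasDerivP4 a t one_pos).continuousAt
  have hev : ∀ᶠ x in nhds (1:ℝ), 0 < P4 a t x := hct.eventually (eventually_gt_nhds h41)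
  obtain ⟨ε, hε, hball⟩ := Metric.eventually_nhds_iff.mp hev
  set δ : ℝ := min ε 1 / 2 with hδdef
  have hδ0 : 0 < δ := by
    rw [hδdef]; exact div_pos (lt_min hε one_pos) two_pos
  have hδε : δ < ε := by
    have h1 : min ε 1 ≤ ε := min_le_left _ _
    rw [hδdef]; linarith
  have hδ1 : δ ≤ 1/2 := by
    have h1 : min ε 1 ≤ 1 := min_le_right _ _
    rw [hδdef]; linarith
  have hc : 0 < 1 - δ := by linarith
  have hc1 : 1 - δ < 1 := by linarith
  have hg4 : ∀ x ∈ Ioo (1-δ) 1, 0 < P4 a t x := by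
    intro x hx
    apply hball
    rw [Real.dist_eq, abs_lt]
    constructor
    · linarith [hx.1]
    · linarith [hx.2]
  have hP3neg := left_neg (P3 a t) (P4 a t) (t-1) hc hc1
    (fun q hq => hasDerivP3 a t hq) hg4 hP3one
  have hP2pos := left_pos (P2 a t) (P3 a t) (t-1) hc hc1
    (fun q hq => hasDerivP2 a t hq) hP3neg hP2one
  have hP1neg := left_neg (P1 a t) (P2 a t) (-t) hc hc1
    (fun q hq => hasDerivP1 a t hq) hP2pos (P1_one a t)
  have hP0pos := left_pos (P0 a t) (P1 a t) (t-1) hc hc1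
    (fun q hq => hasDerivP0 a t hq) hP1neg (P0_one a t)
  -- IVT gives the root y₀ ∈ (0,1)
  set w : ℝ := 1 - δ/2 with hwdef
  have hwI : w ∈ Ioo (1-δ) 1 := by
    constructor
    · rw [hwdef]; linarith
    · rw [hwdef]; linarith
  have hP0w : 0 < P0 a t w := hP0pos w hwI
  have hcont : ContinuousOn (P0 a t) (Icc 0 w) := fun x _ =>
    (P0_contAt a t ht0 x).continuousWithinAt
  have h0w : (0:ℝ) ≤ w := by rw [hwdef]; linarith
  have hmem : (0:ℝ) ∈ Ioo (P0 a t 0) (P0 a t w) := by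
    rw [P0_zero a t ht0]
    exact ⟨by linarith, hP0w⟩
  obtain ⟨y₀, hy₀mem, hy₀⟩ := intermediate_value_Ioo h0w hcont hmem
  have hy₀1 : y₀ < 1 := by
    have : w < 1 := hwI.2
    exact lt_trans hy₀mem.2 this
  refine ⟨y₀, ⟨hy₀mem.1, hy₀1⟩, ?_⟩
  dsimp only
  refine ⟨?_, ?_, ?_⟩
  · -- α y₀ = 0
    rw [if_pos hy₀1.le, if_pos hy₀1.le]
    exact sub_eq_zero_of_eq (bridge_mpr a t y₀ ha ha1 ht0 hy₀mem.1 hy₀)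
  · -- α 1 = 0
    rw [if_pos le_rfl, if_pos le_rfl]
    simp [Real.one_rpow]
  · -- uniqueness
    intro q hq hαq
    by_contra hcon
    obtain ⟨hq1, hqy⟩ := not_or.mp hcon
    have hP0q : P0 a t q = 0 := by
      rcases le_or_gt q 1 with hle | hgt
      · rw [if_pos hle, if_pos hle] at hαq
        exact bridge_mp a t q ha ha1 hq (sub_eq_zero.mp hαq)
      · rw [if_neg (not_le.mpr hgt), if_neg (not_le.mpr hgt)] at hαq
        exact bridge_mp a t q ha ha1 hq (sub_eq_zero.mp hαq).symm
    rcases lt_trichotomy q y₀ with h1 | h1 | h1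
    · exact no_three a t ha ha14 ht hq h1 hy₀1 hP0q hy₀ (P0_one a t) (Or.inr rfl)
    · exact hqy h1
    · rcases lt_trichotomy q 1 with h2 | h2 | h2
      · exact no_three a t ha ha14 ht hy₀mem.1 h1 h2 hy₀ hP0q (P0_one a t) (Or.inr rfl)
      · exact hq1 h2
      · exact no_three a t ha ha14 ht hy₀mem.1 hy₀1 h2 hy₀ (P0_one a t) hP0q (Or.inl rfl)
end

section
/- Let a ∈ (0,1), ζ = a/(1+a), ν = sqrt(1−a^2)/a, κ = sqrt(1−a). For each x > 1 define V(x) = [½(1 − v(x)/ν)]^{1/ζ} where v(x) = (ν*sqrt(x+a) + κ*(x−1))/sqrt(x + a*x^2). Then V is strictly increasing on (1, ∞), V(x) → 0 as x → 1⁺, and V(x) → [½(1 − sqrt(ζ))]^{1/ζ} as x → ∞, and this limit lies strictly between 0 and 1. -/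
open Real Filter Set

set_option maxHeartbeats 1000000

theorem V_properties (a : ℝ) (ha : 0 < a) (ha1 : a < 1) :
    (StrictMonoOn
        (fun x : ℝ =>
          (1 / 2 * (1 -
              ((Real.sqrt (1 - a ^ 2) / a * Real.sqrt (x + a) +
                  Real.sqrt (1 - a) * (x - 1)) / Real.sqrt (x + a * x ^ 2)) /
                (Real.sqrt (1 - a ^ 2) / a))) ^ (1 / (a / (1 + a))))
        (Set.Ioi 1)) ∧
    Filter.Tendsto
      (fun x : ℝ =>
        (1 / 2 * (1 -
            ((Real.sqrt (1 - a ^ 2) / a * Real.sqrt (x + a) +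
                Real.sqrt (1 - a) * (x - 1)) / Real.sqrt (x + a * x ^ 2)) /
              (Real.sqrt (1 - a ^ 2) / a))) ^ (1 / (a / (1 + a))))
      (nhdsWithin 1 (Set.Ioi 1)) (nhds 0) ∧
    Filter.Tendsto
      (fun x : ℝ =>
        (1 / 2 * (1 -
            ((Real.sqrt (1 - a ^ 2) / a * Real.sqrt (x + a) +
                Real.sqrt (1 - a) * (x - 1)) / Real.sqrt (x + a * x ^ 2)) /
              (Real.sqrt (1 - a ^ 2) / a))) ^ (1 / (a / (1 + a))))
      Filter.atTop
      (nhds ((1 / 2 * (1 - Real.sqrt (a / (1 + a)))) ^ (1 / (a / (1 + a))))) ∧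
    0 < (1 / 2 * (1 - Real.sqrt (a / (1 + a)))) ^ (1 / (a / (1 + a))) ∧
    (1 / 2 * (1 - Real.sqrt (a / (1 + a)))) ^ (1 / (a / (1 + a))) < 1 := by
  have ha' : (0:ℝ) < 1 - a := by linarith
  have hap : (0:ℝ) < 1 + a := by linarith
  have ha2 : (0:ℝ) < 1 - a ^ 2 := by nlinarith
  set ν : ℝ := Real.sqrt (1 - a ^ 2) / a with hνdef
  set κ : ℝ := Real.sqrt (1 - a) with hκdef
  set E : ℝ := 1 / (a / (1 + a)) with hEdef
  have hν : 0 < ν := div_pos (Real.sqrt_pos.mpr ha2) ha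
  have hκ : 0 < κ := Real.sqrt_pos.mpr ha'
  have hE : 0 < E := by rw [hEdef]; positivity
  set w : ℝ → ℝ := fun x => (ν * Real.sqrt (x + a) + κ * (x - 1)) / Real.sqrt (x + a * x ^ 2)
    with hwdef
  -- continuity of w on Ici 1
  have hwcont : ContinuousOn w (Ici 1) := by
    apply ContinuousOn.div
    · exact (continuousOn_const.mul ((Real.continuous_sqrt.comp
        (continuous_id.add continuous_const)).continuousOn)).add
        (continuousOn_const.mul ((continuous_id.sub continuous_const).continuousOn))
    · exact (Real.continuous_sqrt.comp
        (continuous_id.add (continuous_const.mul (continuous_pow 2)))).continuousOn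
    · intro x hx
      simp only [mem_Ici] at hx
      exact Real.sqrt_ne_zero'.mpr (by nlinarith)
  -- strict antitonicity of w on Ici 1
  have hwanti : StrictAntiOn w (Ici 1) := by
    apply strictAntiOn_of_deriv_neg (convex_Ici 1) hwcont
    intro x hx
    rw [interior_Ici] at hx
    have hx1 : (1:ℝ) < x := hx
    have hxa' : (0:ℝ) < x + a := by linarith
    have hxg' : (0:ℝ) < x + a * x ^ 2 := by nlinarith
    set s : ℝ := Real.sqrt (x + a) with hsdef
    set g : ℝ := Real.sqrt (x + a * x ^ 2) with hgdef
    have hs : 0 < s := Real.sqrt_pos.mpr hxa'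
    have hg : 0 < g := Real.sqrt_pos.mpr hxg'
    have hs2 : s ^ 2 = x + a := Real.sq_sqrt hxa'.le
    have hg2 : g ^ 2 = x + a * x ^ 2 := Real.sq_sqrt hxg'.le
    have h1 : HasDerivAt (fun y : ℝ => Real.sqrt (y + a)) (1 / (2 * s)) x := by
      have h := (Real.hasDerivAt_sqrt hxa'.ne').comp x ((hasDerivAt_id x).add_const a)
      exact h.congr_deriv (by rw [hsdef]; ring)
    have hi : HasDerivAt (fun y : ℝ => y + a * y ^ 2) (1 + 2 * a * x) x := by
      have h := (hasDerivAt_id x).add ((hasDerivAt_pow 2 x).const_mul a)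
      exact h.congr_deriv (by ring)
    have h2 : HasDerivAt (fun y : ℝ => Real.sqrt (y + a * y ^ 2))
        ((1 + 2 * a * x) / (2 * g)) x := by
      have h := (Real.hasDerivAt_sqrt hxg'.ne').comp x hi
      exact h.congr_deriv (by rw [hgdef]; ring)
    have hN : HasDerivAt (fun y : ℝ => ν * Real.sqrt (y + a) + κ * (y - 1))
        (ν * (1 / (2 * s)) + κ * 1) x :=
      (h1.const_mul ν).add (((hasDerivAt_id x).sub_const 1).const_mul κ)
    have hw' : HasDerivAt w
        (((ν * (1 / (2 * s)) + κ * 1) * g -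
          (ν * s + κ * (x - 1)) * ((1 + 2 * a * x) / (2 * g))) / g ^ 2) x :=
      hN.div h2 hg.ne'
    rw [hw'.deriv]
    apply div_neg_of_neg_of_pos _ (by positivity)
    -- key inequality
    have hM : (0:ℝ) < (1 + 2 * a) * x + 1 := by nlinarith
    have hP : (0:ℝ) < x ^ 2 + 2 * a * x + 1 := by nlinarith
    have hνa : ν * a = Real.sqrt (1 - a ^ 2) := by
      rw [hνdef]; field_simp
    have hkey : κ * s * ((1 + 2 * a) * x + 1) < ν * a * (x ^ 2 + 2 * a * x + 1) := by
      have hsq : (κ * s * ((1 + 2 * a) * x + 1)) ^ 2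
          < (ν * a * (x ^ 2 + 2 * a * x + 1)) ^ 2 := by
        have eκ : κ ^ 2 = 1 - a := Real.sq_sqrt ha'.le
        have e1 : (κ * s * ((1 + 2 * a) * x + 1)) ^ 2
            = (1 - a) * ((x + a) * ((1 + 2 * a) * x + 1) ^ 2) := by
          rw [mul_pow, mul_pow, eκ, hs2]; ring
        have e3 : Real.sqrt (1 - a ^ 2) ^ 2 = 1 - a ^ 2 := Real.sq_sqrt ha2.le
        have e2 : (ν * a * (x ^ 2 + 2 * a * x + 1)) ^ 2
            = (1 - a ^ 2) * (x ^ 2 + 2 * a * x + 1) ^ 2 := by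
          rw [hνa, mul_pow, e3]
        rw [e1, e2]
        have hQ : (0:ℝ) < (1 + a) * x ^ 2 + (1 + 2 * a) * x + 1 := by nlinarith
        have hx1' : (0:ℝ) < x - 1 := by linarith
        have hpos : (0:ℝ) < (x - 1) ^ 2 * ((1 + a) * x ^ 2 + (1 + 2 * a) * x + 1) :=
          mul_pos (by positivity) hQ
        have hD : (1 - a ^ 2) * (x ^ 2 + 2 * a * x + 1) ^ 2 -
            (1 - a) * ((x + a) * ((1 + 2 * a) * x + 1) ^ 2)
            = (1 - a) * ((x - 1) ^ 2 * ((1 + a) * x ^ 2 + (1 + 2 * a) * x + 1)) := by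
          ring
        nlinarith [mul_pos ha' hpos]
      exact lt_of_pow_lt_pow_left₀ 2 (by positivity) hsq
    have hrw : (ν * (1 / (2 * s)) + κ * 1) * g -
          (ν * s + κ * (x - 1)) * ((1 + 2 * a * x) / (2 * g))
        = ((ν + 2 * κ * s) * g ^ 2 -
            (ν * s + κ * (x - 1)) * (1 + 2 * a * x) * s) / (2 * s * g) := by
      field_simp
    rw [hrw, hg2]
    apply div_neg_of_neg_of_pos _ (by positivity)
    have hid : (ν + 2 * κ * s) * (x + a * x ^ 2) -
          (ν * s + κ * (x - 1)) * (1 + 2 * a * x) * s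
        = κ * s * ((1 + 2 * a) * x + 1) - ν * a * (x ^ 2 + 2 * a * x + 1) := by
      linear_combination (-(ν * (1 + 2 * a * x))) * hs2
    rw [hid]
    linarith
  have hw1 : w 1 = ν := by
    rw [hwdef]
    have h : (1:ℝ) + a * 1 ^ 2 = 1 + a := by ring
    simp only [h, sub_self, mul_zero, add_zero]
    rw [mul_div_assoc, div_self (Real.sqrt_ne_zero'.mpr hap), mul_one]
  -- w x < ν for x > 1
  have hwlt : ∀ x ∈ Ioi (1:ℝ), w x < ν := by
    intro x hx
    have := hwanti self_mem_Ici (mem_Ici.mpr (le_of_lt hx)) hx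
    rwa [hw1] at this
  constructor
  · -- strict monotonicity
    intro x hx y hy hxy
    have hwyx : w y < w x := hwanti (mem_Ici.mpr (le_of_lt hx)) (mem_Ici.mpr (le_of_lt hy)) hxy
    have hwx : w x < ν := hwlt x hx
    have hBx : 0 < 1 / 2 * (1 - w x / ν) := by
      have : w x / ν < 1 := (div_lt_one hν).mpr hwx
      linarith
    have hBxy : 1 / 2 * (1 - w x / ν) < 1 / 2 * (1 - w y / ν) := by
      have : w y / ν < w x / ν := by gcongr
      linarith
    show (1 / 2 * (1 - w x / ν)) ^ E < (1 / 2 * (1 - w y / ν)) ^ E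
    exact Real.rpow_lt_rpow hBx.le hBxy hE
  refine ⟨?_, ?_, ?_, ?_⟩
  · -- limit at 1 from the right
    have hwc1 : Tendsto w (nhdsWithin 1 (Ioi 1)) (nhds ν) := by
      have h := (hwcont 1 self_mem_Ici).tendsto
      rw [hw1] at h
      exact h.mono_left (nhdsWithin_mono 1 Ioi_subset_Ici_self)
    have hB0 : Tendsto (fun x => 1 / 2 * (1 - w x / ν)) (nhdsWithin 1 (Ioi 1)) (nhds 0) := by
      have h : Tendsto (fun x => 1 / 2 * (1 - w x / ν)) (nhdsWithin 1 (Ioi 1))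
          (nhds (1 / 2 * (1 - ν / ν))) :=
        (tendsto_const_nhds.sub (hwc1.div_const ν)).const_mul (1 / 2)
      simpa [div_self hν.ne'] using h
    have h := ((Real.continuousAt_rpow_const 0 E (Or.inr hE.le)).tendsto).comp hB0
    simpa [Function.comp_def, Real.zero_rpow hE.ne'] using h
  · -- limit at infinity
    have hinv : Tendsto (fun x : ℝ => 1 / x) atTop (nhds 0) := by
      simpa [one_div] using (tendsto_inv_atTop_zero : Tendsto (fun r : ℝ => r⁻¹) atTop (nhds 0))
    have hinv2 : Tendsto (fun x : ℝ => 1 / x ^ 2) atTop (nhds 0) := by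
      simpa [one_div, Function.comp_def] using
        (tendsto_inv_atTop_zero.comp (tendsto_pow_atTop (two_ne_zero) :
          Tendsto (fun x : ℝ => x ^ 2) atTop atTop))
    -- (x+a)/(x+a x^2) → 0
    have t0 : Tendsto (fun x : ℝ => (x + a) / (x + a * x ^ 2)) atTop (nhds 0) := by
      have h : Tendsto (fun x : ℝ => (1 / x + a * (1 / x ^ 2)) / (1 / x + a)) atTop
          (nhds ((0 + a * 0) / (0 + a))) :=
        Tendsto.div ((hinv.add (hinv2.const_mul a)))
          (hinv.add tendsto_const_nhds) (by simpa using ha.ne')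
      have h' : Tendsto (fun x : ℝ => (1 / x + a * (1 / x ^ 2)) / (1 / x + a)) atTop
          (nhds 0) := by simpa using h
      apply h'.congr'
      filter_upwards [eventually_gt_atTop (0:ℝ)] with x hx
      have hx' : x ≠ 0 := hx.ne'
      field_simp
    -- (x-1)^2/(x+a x^2) → 1/a
    have t1 : Tendsto (fun x : ℝ => (x - 1) ^ 2 / (x + a * x ^ 2)) atTop (nhds (1 / a)) := by
      have h : Tendsto (fun x : ℝ => (1 - 1 / x) ^ 2 / (1 / x + a)) atTop
          (nhds ((1 - 0) ^ 2 / (0 + a))) :=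
        Tendsto.div ((tendsto_const_nhds.sub hinv).pow 2)
          (hinv.add tendsto_const_nhds) (by simpa using ha.ne')
      have h' : Tendsto (fun x : ℝ => (1 - 1 / x) ^ 2 / (1 / x + a)) atTop
          (nhds (1 / a)) := by simpa using h
      apply h'.congr'
      filter_upwards [eventually_gt_atTop (0:ℝ)] with x hx
      have hx' : x ≠ 0 := hx.ne'
      field_simp
    -- sqrt(x+a)/sqrt(x+a x^2) → 0
    have ta : Tendsto (fun x : ℝ => Real.sqrt (x + a) / Real.sqrt (x + a * x ^ 2)) atTop
        (nhds 0) := by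
      have h := (Real.continuous_sqrt.tendsto 0).comp t0
      rw [Real.sqrt_zero] at h
      apply h.congr'
      filter_upwards [eventually_ge_atTop (1:ℝ)] with x hx
      simp only [Function.comp_apply]
      rw [Real.sqrt_div (by linarith : (0:ℝ) ≤ x + a)]
    -- (x-1)/sqrt(x+a x^2) → sqrt(1/a)
    have tb : Tendsto (fun x : ℝ => (x - 1) / Real.sqrt (x + a * x ^ 2)) atTop
        (nhds (Real.sqrt (1 / a))) := by
      have h := (Real.continuous_sqrt.tendsto (1 / a)).comp t1
      apply h.congr'
      filter_upwards [eventually_ge_atTop (1:ℝ)] with x hx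
      simp only [Function.comp_apply]
      rw [Real.sqrt_div (sq_nonneg _), Real.sqrt_sq (by linarith : (0:ℝ) ≤ x - 1)]
    -- w → κ * sqrt(1/a)
    have tw : Tendsto w atTop (nhds (κ * Real.sqrt (1 / a))) := by
      have h := (ta.const_mul ν).add (tb.const_mul κ)
      have h' : Tendsto (fun x : ℝ => ν * (Real.sqrt (x + a) / Real.sqrt (x + a * x ^ 2)) +
          κ * ((x - 1) / Real.sqrt (x + a * x ^ 2))) atTop (nhds (κ * Real.sqrt (1 / a))) := by
        simpa using h
      apply h'.congr
      intro x
      rw [hwdef]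
      simp only []
      rw [add_div, mul_div_assoc, mul_div_assoc]
    -- identify the limit
    have hlim : κ * Real.sqrt (1 / a) / ν = Real.sqrt (a / (1 + a)) := by
      have h0 : 0 ≤ κ * Real.sqrt (1 / a) / ν := by positivity
      have e1 : κ ^ 2 = 1 - a := Real.sq_sqrt ha'.le
      have e2 : Real.sqrt (1 / a) ^ 2 = 1 / a := Real.sq_sqrt (by positivity)
      have e3 : Real.sqrt (1 - a ^ 2) ^ 2 = 1 - a ^ 2 := Real.sq_sqrt ha2.le
      have hsq : (κ * Real.sqrt (1 / a) / ν) ^ 2 = a / (1 + a) := by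
        rw [div_pow, mul_pow, e1, e2, hνdef, div_pow, e3]
        rw [div_eq_div_iff (by positivity) hap.ne']
        field_simp
        ring
      rw [← Real.sqrt_sq h0, hsq]
    have hBlim : Tendsto (fun x => 1 / 2 * (1 - w x / ν)) atTop
        (nhds (1 / 2 * (1 - Real.sqrt (a / (1 + a))))) := by
      have h : Tendsto (fun x => 1 / 2 * (1 - w x / ν)) atTop
          (nhds (1 / 2 * (1 - κ * Real.sqrt (1 / a) / ν))) :=
        (tendsto_const_nhds.sub (tw.div_const ν)).const_mul (1 / 2)
      rwa [hlim] at h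
    have hb1 : Real.sqrt (a / (1 + a)) < 1 := by
      have h := Real.sqrt_lt_sqrt (by positivity : (0:ℝ) ≤ a / (1 + a))
        (by rw [div_lt_one hap]; linarith : a / (1 + a) < 1)
      simpa using h
    have hb : 0 < 1 / 2 * (1 - Real.sqrt (a / (1 + a))) := by linarith
    have h := ((Real.continuousAt_rpow_const _ E (Or.inl hb.ne')).tendsto).comp hBlim
    exact h.congr (fun x => rfl)
  · -- positivity of limit
    have hb1 : Real.sqrt (a / (1 + a)) < 1 := by
      have h := Real.sqrt_lt_sqrt (by positivity : (0:ℝ) ≤ a / (1 + a))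
        (by rw [div_lt_one hap]; linarith : a / (1 + a) < 1)
      simpa using h
    have hb : 0 < 1 / 2 * (1 - Real.sqrt (a / (1 + a))) := by linarith
    exact Real.rpow_pos_of_pos hb E
  · have hb0 : 0 ≤ Real.sqrt (a / (1 + a)) := Real.sqrt_nonneg _
    have hb1 : Real.sqrt (a / (1 + a)) < 1 := by
      have h := Real.sqrt_lt_sqrt (by positivity : (0:ℝ) ≤ a / (1 + a))
        (by rw [div_lt_one hap]; linarith : a / (1 + a) < 1)
      simpa using h
    exact Real.rpow_lt_one (by linarith) (by linarith) hE
end
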